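/- arXiv:2102.13409 — 7 statements merged into one kernel-verified Lean document; each statement's English description precedes it below -/
import Mathlib

section
/- In the rendezvous game on a connected graph G with Facilitator's agents starting at vertices s and t, if Divider has λ_G(s,t) agents (where λ_G(s,t) is the minimum size of a vertex (s,t)-separator), then Divider has a winning strategy; equivalently, d_G(s,t) ≤ λ_G(s,t). -/
namespace Rendezvous

variable {V : Type*}

/-- One agent's move: stay put or move along an edge. -/
def Step (G : SimpleGraph V) (a b : V) : Prop := a = b ∨ G.Adj a b

/-- Adjacency of multisets of agent positions: there is a bijective pairing such
that every agent stays put or moves along an edge. -/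
def MAdj (G : SimpleGraph V) (D D' : Multiset V) : Prop := Multiset.Rel (Step G) D D'

/-- `FWin G n a b D`: with Facilitator's agents on `a`, `b`, Divider's agents on the
multiset `D`, and Facilitator to move, Facilitator can force his two agents to meet
within at most `n` moves, whatever Divider does. -/
def FWin (G : SimpleGraph V) : ℕ → V → V → Multiset V → Prop
  | 0, a, b, _ => a = b
  | n + 1, a, b, D => a = b ∨ ∃ a' b', Step G a a' ∧ Step G b b' ∧ a' ∉ D ∧ b' ∉ D ∧
      (a' = b' ∨ ∀ D', MAdj G D D' → a' ∉ D' → b' ∉ D' → FWin G n a' b' D')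

/-- Divider with `k` agents has a winning strategy in the rendezvous game on `G`
starting from `s` and `t`: there is an initial placement from which Facilitator can
never force a meeting. -/
def DividerWins (G : SimpleGraph V) (s t : V) (k : ℕ) : Prop :=
  ∃ D : Multiset V, Multiset.card D = k ∧ s ∉ D ∧ t ∉ D ∧ ∀ n, ¬ FWin G n s t D

/-- `d_G(s,t)`: the minimum number of Divider agents sufficient for Divider to win
(`⊤` if no number suffices, e.g. when `s = t` or `s`, `t` are adjacent). -/
noncomputable def dNum (G : SimpleGraph V) (s t : V) : ℕ∞ :=
  sInf {n : ℕ∞ | ∃ k : ℕ, (k : ℕ∞) = n ∧ DividerWins G s t k}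

/-- A vertex `(s,t)`-separator: a set of vertices avoiding `s` and `t` meeting
every walk from `s` to `t`. -/
def IsSeparator (G : SimpleGraph V) (s t : V) (S : Finset V) : Prop :=
  s ∉ S ∧ t ∉ S ∧ ∀ p : G.Walk s t, ∃ v ∈ p.support, v ∈ S

/-- `λ_G(s,t)`: minimum size of a vertex `(s,t)`-separator (`⊤` if none exists). -/
noncomputable def lambdaNum (G : SimpleGraph V) (s t : V) : ℕ∞ :=
  sInf {n : ℕ∞ | ∃ S : Finset V, (S.card : ℕ∞) = n ∧ IsSeparator G s t S}

end Rendezvous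

open Rendezvous

section Aux

variable {V : Type*} {G : SimpleGraph V} {s t a b a' b' : V} {S : Finset V}

/-- There is a walk from `s` to `a` avoiding the set `S`. -/
def AvoidWalk (G : SimpleGraph V) (S : Finset V) (s a : V) : Prop :=
  ∃ p : G.Walk s a, ∀ v ∈ p.support, v ∉ S

lemma avoidWalk_step (h : AvoidWalk G S s a) (hstep : Step G a a') (ha' : a' ∉ S) :
    AvoidWalk G S s a' := by
  obtain ⟨p, hp⟩ := h
  rcases hstep with rfl | hadj
  · exact ⟨p, hp⟩
  · refine ⟨p.concat hadj, ?_⟩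
    intro v hv
    rw [SimpleGraph.Walk.support_concat, List.mem_append] at hv
    rcases hv with hv | hv
    · exact hp v hv
    · simp only [List.mem_singleton] at hv
      subst hv; exact ha'

lemma avoidWalk_ne (hsep : IsSeparator G s t S) (ha : AvoidWalk G S s a)
    (hb : AvoidWalk G S t b) : a ≠ b := by
  rintro rfl
  obtain ⟨p, hp⟩ := ha
  obtain ⟨q, hq⟩ := hb
  obtain ⟨v, hv, hvS⟩ := hsep.2.2 (p.append q.reverse)
  rw [SimpleGraph.Walk.mem_support_append_iff] at hv
  rcases hv with hv | hv
  · exact hp v hv hvS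
  · rw [SimpleGraph.Walk.support_reverse, List.mem_reverse] at hv
    exact hq v hv hvS

lemma mAdj_refl (D : Multiset V) : MAdj G D D := by
  induction D using Multiset.induction_on with
  | empty => exact Multiset.Rel.zero
  | cons x D ih => exact Multiset.Rel.cons (Or.inl rfl) ih

lemma not_fwin_of_sep (hsep : IsSeparator G s t S) :
    ∀ (n : ℕ) (a b : V), AvoidWalk G S s a → AvoidWalk G S t b →
      ¬ FWin G n a b S.val := by
  intro n
  induction n with
  | zero => intro a b ha hb h; exact avoidWalk_ne hsep ha hb h
  | succ n ih =>
    intro a b ha hb h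
    rcases h with rfl | ⟨a', b', hsa, hsb, ha', hb', h⟩
    · exact avoidWalk_ne hsep ha hb rfl
    · have ha'S : a' ∉ S := fun hx => ha' (Finset.mem_val.mpr hx)
      have hb'S : b' ∉ S := fun hx => hb' (Finset.mem_val.mpr hx)
      have ha2 := avoidWalk_step ha hsa ha'S
      have hb2 := avoidWalk_step hb hsb hb'S
      rcases h with rfl | h
      · exact avoidWalk_ne hsep ha2 hb2 rfl
      · exact ih a' b' ha2 hb2 (h S.val (mAdj_refl S.val) ha' hb')

lemma dividerWins_of_sep (hsep : IsSeparator G s t S) : DividerWins G s t S.card := by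
  refine ⟨S.val, rfl, fun h => hsep.1 (Finset.mem_val.mp h),
    fun h => hsep.2.1 (Finset.mem_val.mp h), fun n => ?_⟩
  exact not_fwin_of_sep hsep n s t ⟨SimpleGraph.Walk.nil, by simpa using hsep.1⟩
    ⟨SimpleGraph.Walk.nil, by simpa using hsep.2.1⟩

end Aux

/-- on a connected graph `G` with Facilitator starting at the distinct
nonadjacent vertices `s` and `t`, Divider with `λ_G(s,t)` agents has a winning
strategy; equivalently, `d_G(s,t) ≤ λ_G(s,t)`. -/
theorem divider_wins_with_lambda_agents {V : Type*} (G : SimpleGraph V)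
    (hconn : G.Connected) (s t : V) (hst : s ≠ t) (hadj : ¬ G.Adj s t) :
    (∀ k : ℕ, (k : ℕ∞) = lambdaNum G s t → DividerWins G s t k) ∧
      dNum G s t ≤ lambdaNum G s t := by
  set Lset := {n : ℕ∞ | ∃ S : Finset V, (S.card : ℕ∞) = n ∧ IsSeparator G s t S} with hLset
  have hattain : Lset.Nonempty → lambdaNum G s t ∈ Lset := by
    intro hne
    obtain ⟨m, hm, hmin⟩ := wellFounded_lt.has_min Lset hne
    have hsm : sInf Lset = m :=
      le_antisymm (sInf_le hm) (le_sInf fun x hx => le_of_not_gt (hmin x hx))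
    rw [lambdaNum, ← hLset, hsm]; exact hm
  constructor
  · intro k hk
    have hne : Lset.Nonempty := by
      by_contra h
      rw [Set.not_nonempty_iff_eq_empty] at h
      rw [lambdaNum, ← hLset, h, sInf_empty] at hk
      exact (ENat.coe_ne_top k) hk
    obtain ⟨S, hScard, hsep⟩ := hattain hne
    rw [← hk] at hScard
    have : S.card = k := by exact_mod_cast hScard
    rw [← this]
    exact dividerWins_of_sep hsep
  · rcases Set.eq_empty_or_nonempty Lset with h | hne
    · rw [lambdaNum, ← hLset, h, sInf_empty]; exact le_top
    · obtain ⟨S, hScard, hsep⟩ := hattain hne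
      have hmem : lambdaNum G s t ∈ {n : ℕ∞ | ∃ k : ℕ, (k : ℕ∞) = n ∧ DividerWins G s t k} :=
        ⟨S.card, hScard, dividerWins_of_sep hsep⟩
      exact sInf_le hmem
end

section
/- Let G be a connected graph and s, t ∈ V(G) distinct nonadjacent vertices. Then d_G(s,t) = 1 if and only if λ_G(s,t) = 1. -/
open Rendezvous SimpleGraph

namespace RendezvousAux

variable {V : Type*} {G : SimpleGraph V}

lemma fwin_zero {a b : V} {D : Multiset V} : FWin G 0 a b D ↔ a = b := Iff.rfl

lemma fwin_succ {n : ℕ} {a b : V} {D : Multiset V} :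
    FWin G (n + 1) a b D ↔ a = b ∨ ∃ a' b', Step G a a' ∧ Step G b b' ∧ a' ∉ D ∧ b' ∉ D ∧
      (a' = b' ∨ ∀ D', MAdj G D D' → a' ∉ D' → b' ∉ D' → FWin G n a' b' D') := Iff.rfl

lemma fwin_succ_of {n : ℕ} : ∀ {a b : V} {D : Multiset V}, FWin G n a b D → FWin G (n+1) a b D := by
  induction n with
  | zero => intro a b D h; exact Or.inl (fwin_zero.mp h)
  | succ n ih =>
    intro a b D h
    rcases fwin_succ.mp h with h | ⟨a', b', sa, sb, ha, hb, hc⟩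
    · exact Or.inl h
    · refine Or.inr ⟨a', b', sa, sb, ha, hb, ?_⟩
      rcases hc with h | h
      · exact Or.inl h
      · exact Or.inr fun D' hD' h1 h2 => ih (h D' hD' h1 h2)

lemma fwin_mono {n m : ℕ} (hnm : n ≤ m) {a b : V} {D : Multiset V}
    (h : FWin G n a b D) : FWin G m a b D := by
  induction m with
  | zero => rwa [Nat.le_zero.mp hnm] at h
  | succ m ih =>
    rcases Nat.lt_or_ge n (m+1) with hlt | hge
    · exact fwin_succ_of (ih (Nat.lt_succ_iff.mp hlt))
    · rwa [Nat.le_antisymm hnm hge] at h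

lemma fwin_meet {a b y d : V} (sa : Step G a y) (sb : Step G b y) (hy : y ≠ d) :
    FWin G 1 a b {d} :=
  Or.inr ⟨y, y, sa, sb, by simp [hy], by simp [hy], Or.inl rfl⟩

lemma madj_single {d : V} {D' : Multiset V} (h : MAdj G {d} D') :
    ∃ d', Step G d d' ∧ D' = {d'} := by
  rw [MAdj, ← Multiset.cons_zero d, Multiset.rel_cons_left] at h
  obtain ⟨b, bs, hstep, hrel, rfl⟩ := h
  rw [Multiset.rel_zero_left] at hrel
  exact ⟨b, hstep, by rw [hrel, Multiset.cons_zero]⟩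

lemma fwin_move {n : ℕ} {a b a' b' d : V} (sa : Step G a a') (sb : Step G b b')
    (ha : a' ≠ d) (hb : b' ≠ d)
    (h : ∀ d', Step G d d' → d' ≠ a' → d' ≠ b' → FWin G n a' b' {d'}) :
    FWin G (n + 1) a b {d} := by
  refine Or.inr ⟨a', b', sa, sb, by simp [ha], by simp [hb], Or.inr ?_⟩
  intro D' hD' h1 h2
  obtain ⟨d', hstep, rfl⟩ := madj_single hD'
  simp only [Multiset.mem_singleton] at h1 h2
  exact h d' hstep (fun hh => h1 hh.symm) (fun hh => h2 hh.symm)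

/-- A walk of length ≤ 1 realizing a `Step`. -/
lemma walk_of_step {a b : V} (h : Step G a b) :
    ∃ p : G.Walk a b, p.length ≤ 1 ∧ ∀ x ∈ p.support, x = a ∨ x = b := by
  rcases h with rfl | h
  · exact ⟨Walk.nil, by simp, by simp⟩
  · exact ⟨Walk.cons h Walk.nil, by simp, by simp⟩

lemma step_symm {a b : V} (h : Step G a b) : Step G b a := by
  rcases h with rfl | h
  · exact Or.inl rfl
  · exact Or.inr h.symm

lemma ne_of_isPath_pos {a b : V} {q : G.Walk a b} (hq : q.IsPath) (hl : 0 < q.length) :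
    a ≠ b := by
  cases q with
  | nil => simp at hl
  | cons h r =>
    rw [Walk.cons_isPath_iff] at hq
    rintro rfl
    exact hq.2 r.end_mem_support

lemma isPath_decomp {a b c : V} {p : G.Walk a b} {q : G.Walk b c}
    (h : (p.append q).IsPath) :
    p.IsPath ∧ q.IsPath ∧ (∀ x, x ∈ p.support → x ∈ q.support → x = b) := by
  have hs : (p.append q).support = p.support ++ q.support.tail := Walk.support_append _ _
  rw [Walk.isPath_def, hs, List.nodup_append] at h
  obtain ⟨h1, h2, h3⟩ := h
  have hq : q.support = b :: q.support.tail := q.support_eq_cons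
  have hbt : b ∉ q.support.tail := fun hb => h3 _ p.end_mem_support _ hb rfl
  refine ⟨Walk.isPath_def _ |>.mpr h1, Walk.isPath_def _ |>.mpr ?_, ?_⟩
  · rw [hq]; exact List.nodup_cons.mpr ⟨hbt, h2⟩
  · intro x hxp hxq
    rw [hq, List.mem_cons] at hxq
    rcases hxq with rfl | hxq
    · rfl
    · exact absurd hxq (fun hq => h3 _ hxp _ hq rfl)

lemma isPath_append_of {a b c : V} {p : G.Walk a b} {q : G.Walk b c}
    (hp : p.IsPath) (hq : q.IsPath) (hmid : ∀ x, x ∈ p.support → x ∈ q.support → x = b) :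
    (p.append q).IsPath := by
  rw [Walk.isPath_def, Walk.support_append, List.nodup_append]
  refine ⟨Walk.isPath_def _ |>.mp hp, ?_, ?_⟩
  · have := Walk.isPath_def _ |>.mp hq
    rw [q.support_eq_cons] at this
    exact (List.nodup_cons.mp this).2
  · rintro x hxp _ hxq rfl
    have hx : x ∈ q.support := by
      rw [q.support_eq_cons]; exact List.mem_cons_of_mem _ hxq
    have hb := hmid x hxp hx
    subst hb
    have := Walk.isPath_def _ |>.mp hq
    rw [q.support_eq_cons, List.nodup_cons] at this
    exact this.1 hxq

/-- Find the last vertex of a path `P` lying in a list `L` (the start is in `L`),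
together with the remaining subpath which avoids `L` except at that vertex. -/
lemma exists_last_hit : ∀ (n : ℕ) {a b : V} (P : G.Walk a b), P.length ≤ n → P.IsPath →
    ∀ (L : List V), a ∈ L →
    ∃ (w : V), w ∈ L ∧ ∃ (P₂ : G.Walk w b), P₂.length ≤ P.length ∧ P₂.IsPath ∧
      (∀ x ∈ P₂.support, x ∈ P.support) ∧ (∀ x ∈ P₂.support, x ∈ L → x = w) := by
  intro n
  induction n with
  | zero =>
    intro a b P hlen hP L haL
    refine ⟨a, haL, P, le_rfl, hP, fun x hx => hx, ?_⟩
    intro x hx _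
    have : P.support = [a] := by
      cases P with
      | nil => simp
      | cons h q => simp at hlen
    rw [this] at hx; simpa using hx
  | succ n ih =>
    intro a b P hlen hP L haL
    classical
    by_cases hx : ∃ x, x ∈ P.support.tail ∧ x ∈ L
    · obtain ⟨x₀, hxt, hxL⟩ := hx
      have hxs : x₀ ∈ P.support := by
        rw [P.support_eq_cons]; exact List.mem_cons_of_mem _ hxt
      have hx0a : x₀ ≠ a := by
        intro h; subst h
        have := Walk.isPath_def _ |>.mp hP
        rw [P.support_eq_cons, List.nodup_cons] at this
        exact this.1 hxt
      have hdlen : (P.dropUntil x₀ hxs).length < P.length := by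
        have hspec := P.take_spec hxs
        have : (P.takeUntil x₀ hxs).length + (P.dropUntil x₀ hxs).length = P.length := by
          rw [← Walk.length_append, hspec]
        have htl : 0 < (P.takeUntil x₀ hxs).length := by
          by_contra hc
          push_neg at hc
          interval_cases h : (P.takeUntil x₀ hxs).length
          · exact hx0a ((P.takeUntil x₀ hxs).eq_of_length_eq_zero h).symm
        omega
      obtain ⟨w, hwL, P₂, hl2, hp2, hsub2, hlast⟩ :=
        ih (P.dropUntil x₀ hxs) (by omega) (hP.dropUntil hxs) L hxL
      refine ⟨w, hwL, P₂, by omega, hp2, ?_, hlast⟩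
      intro x hxp
      exact (Walk.support_dropUntil_subset P hxs) (hsub2 x hxp)
    · push_neg at hx
      refine ⟨a, haL, P, le_rfl, hP, fun x h => h, ?_⟩
      intro x hxp hxL
      rw [P.support_eq_cons, List.mem_cons] at hxp
      rcases hxp with rfl | hxp
      · rfl
      · exact absurd hxL (hx x hxp)

end RendezvousAux

namespace RendezvousAux

variable {V : Type*} {G : SimpleGraph V}

/-- One-sided squeeze along a simple path: Facilitator either wins outright or
forces a "pin": Divider's agent sits at an interior vertex flanked by both agents. -/
lemma sqz2 {N : ℕ} :
    ∀ (σ : ℕ) {u v : V} (S : G.Walk u v), S.length ≤ σ → S.IsPath →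
    (∀ (x y z : V) (e₁ : G.Adj x y) (e₂ : G.Adj y z) (S₁ : G.Walk u x) (S₂ : G.Walk z v),
        S = S₁.append (Walk.cons e₁ (Walk.cons e₂ S₂)) → FWin G N x z {y}) →
    ∀ d : V, d ≠ u → d ≠ v → FWin G (σ + N + 2) u v {d} := by
  intro σ
  induction σ with
  | zero =>
    intro u v S hlen hS _ d _ _
    have huv : u = v := S.eq_of_length_eq_zero (Nat.le_zero.mp hlen)
    subst huv
    exact fwin_mono (Nat.zero_le _) (fwin_zero.mpr rfl)
  | succ σ ih =>
    intro u v S hlen hS hpin d hdu hdv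
    cases S with
    | nil => exact fwin_mono (Nat.zero_le _) (fwin_zero.mpr rfl)
    | @cons _ c _ h S1 =>
      cases S1 with
      | nil =>
        exact fwin_mono (by omega) (fwin_meet (Or.inr h) (Or.inl rfl) (Ne.symm hdv))
      | @cons _ c₂ _ h' S2 =>
        classical
        by_cases hdc : d = c
        · subst hdc
          cases S2 with
          | nil =>
            have hp := hpin u d _ h h' Walk.nil Walk.nil (Walk.nil_append _).symm
            exact fwin_mono (by omega) hp
          | @cons _ c₃ _ h'' S3 =>
            obtain ⟨w, q, e, hq⟩ := Walk.exists_cons_eq_concat h' (Walk.cons h'' S3)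
            have hS' : (Walk.cons h' (Walk.cons h'' S3)).IsPath := hS.of_cons
            have hqe : (q.concat e).IsPath := by rwa [hq] at hS'
            have hqpath : q.IsPath := by
              rw [Walk.concat_eq_append] at hqe
              exact hqe.of_append_left
            have hqlen : q.length = S3.length + 1 := by
              have h0 := congrArg Walk.length hq
              simp only [Walk.length_cons, Walk.length_concat] at h0
              omega
            have hcw : d ≠ w := ne_of_isPath_pos hqpath (by omega)
            have huq : u ∉ (q.concat e).support := by
              have h1 := ((Walk.cons_isPath_iff h _).mp hS).2
              rwa [hq] at h1
            have huq' : u ∉ q.support := by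
              intro hu
              apply huq
              rw [Walk.concat_eq_append, Walk.mem_support_append_iff]
              exact Or.inl hu
            have hconsq : (Walk.cons h q).IsPath :=
              (Walk.cons_isPath_iff h q).mpr ⟨hqpath, huq'⟩
            have hlen' : (Walk.cons h q).length ≤ σ := by
              simp only [Walk.length_cons] at hlen ⊢
              omega
            refine fwin_move (Or.inl rfl) (Or.inr e.symm) (G.ne_of_adj h) (Ne.symm hcw) ?_
            intro d' _ hd'u hd'w
            refine fwin_mono (by omega) (ih (Walk.cons h q) hlen' hconsq ?_ d' hd'u hd'w)
            intro x y z e₁ e₂ S₁ S₂ heq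
            refine hpin x y z e₁ e₂ S₁ (S₂.concat e) ?_
            show Walk.cons h (Walk.cons h' (Walk.cons h'' S3)) = _
            rw [hq, ← Walk.concat_cons, heq, ← Walk.append_concat, Walk.concat_cons,
              Walk.concat_cons]
        · -- left advance
          have hlen' : (Walk.cons h' S2).length ≤ σ := by
            simp only [Walk.length_cons] at hlen ⊢
            omega
          refine fwin_move (Or.inr h) (Or.inl rfl) (Ne.symm hdc) (Ne.symm hdv) ?_
          intro d' _ hd'c hd'v
          refine fwin_mono (by omega) (ih (Walk.cons h' S2) hlen' hS.of_cons ?_ d' hd'c hd'v)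
          intro x y z e₁ e₂ S₁ S₂ heq
          exact hpin x y z e₁ e₂ (Walk.cons h S₁) S₂ (by rw [heq, Walk.cons_append])

end RendezvousAux

namespace RendezvousAux

variable {V : Type*} {G : SimpleGraph V}

lemma reassemble {A B u c w v : V} (PL : G.Walk A u) (h : G.Adj u c) (q : G.Walk c w)
    (e : G.Adj w v) (PR : G.Walk v B) :
    (PL.concat h).append (q.append (Walk.cons e PR)) =
      PL.append ((Walk.cons h (q.concat e)).append PR) := by
  rw [Walk.concat_append, Walk.cons_append, Walk.concat_append]

lemma support_sub_concat {c w v : V} (q : G.Walk c w) (e : G.Adj w v) :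
    q.support ⊆ (q.concat e).support := by
  intro x hx
  rw [Walk.concat_eq_append, Walk.mem_support_append_iff]
  exact Or.inl hx

/-- Phase 1: the balanced squeeze.  Both agents advance along the middle path, and
Divider's agent can never have entered the middle strictly; if it ever does, we are
handed to the endgame HANDLER together with its travel walk `W'`. -/
lemma sqz1 {NN Qlen : ℕ} {A B pp : V}
    (HANDLER : ∀ {u' v' g : V} (PL' : G.Walk A u') (M' : G.Walk u' v') (PR' : G.Walk v' B)
        (W' : G.Walk pp g),
        (PL'.append (M'.append PR')).IsPath →
        pp ∉ (PL'.append (M'.append PR')).support →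
        PL'.length = PR'.length → W'.length ≤ PL'.length →
        PL'.length + M'.length + PR'.length = Qlen →
        g ∈ M'.support → g ≠ u' → g ≠ v' →
        (∀ x ∈ W'.support, x ∈ M'.support → x = u' ∨ x = v' ∨ x = g) →
        FWin G NN u' v' {g}) :
    ∀ (μ : ℕ) {u v d : V} (PL : G.Walk A u) (M : G.Walk u v) (PR : G.Walk v B)
      (W : G.Walk pp d),
      M.length ≤ μ →
      (PL.append (M.append PR)).IsPath →
      pp ∉ (PL.append (M.append PR)).support →
      PL.length = PR.length → W.length ≤ PL.length →
      PL.length + M.length + PR.length = Qlen →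
      d ≠ u → d ≠ v →
      (∀ x ∈ W.support, x ∈ M.support → x = u ∨ x = v) →
      FWin G (μ + NN + 2) u v {d} := by
  intro μ
  induction μ using Nat.strong_induction_on with
  | _ μ ih =>
  intro u v d PL M PR W hμ hpath hpp hlr hw hsum hdu hdv hWM
  have hMPR : (M.append PR).IsPath := (isPath_decomp hpath).2.1
  have hMpath : M.IsPath := (isPath_decomp hMPR).1
  cases M with
  | nil => exact fwin_mono (Nat.zero_le _) (fwin_zero.mpr rfl)
  | @cons _ c _ h S1 =>
    cases S1 with
    | nil =>
      exact fwin_mono (by omega) (fwin_meet (Or.inr h) (Or.inl rfl) (Ne.symm hdv))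
    | @cons _ c₂ _ h' S2 =>
      have hcd : c ≠ d := by
        intro hcd
        rcases hWM d W.end_mem_support (by rw [← hcd]; simp) with h1 | h1
        · exact hdu h1
        · exact hdv h1
      cases S2 with
      | nil =>
        -- length 2: meet at middle c (c ≠ d)
        exact fwin_mono (by omega)
          (fwin_meet (Or.inr h) (Or.inr h'.symm) hcd)
      | @cons _ c₃ _ h'' S3 =>
        classical
        obtain ⟨w, q, e, hq⟩ := Walk.exists_cons_eq_concat h' (Walk.cons h'' S3)
        have hS' : (Walk.cons h' (Walk.cons h'' S3)).IsPath := hMpath.of_cons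
        have hqe : (q.concat e).IsPath := by rwa [hq] at hS'
        have hqpath : q.IsPath := by
          rw [Walk.concat_eq_append] at hqe
          exact hqe.of_append_left
        have hqlen : q.length = S3.length + 1 := by
          have h0 := congrArg Walk.length hq
          simp only [Walk.length_cons, Walk.length_concat] at h0
          omega
        have hqsubM : ∀ x ∈ q.support, x ∈ (Walk.cons h (Walk.cons h' (Walk.cons h'' S3))).support := by
          intro x hx
          rw [Walk.support_cons, hq, List.mem_cons]
          exact Or.inr (support_sub_concat q e hx)
        have hwM : w ∈ (Walk.cons h (Walk.cons h' (Walk.cons h'' S3))).support :=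
          hqsubM w q.end_mem_support
        have hwd : w ≠ d := by
          intro hwd
          rcases hWM d W.end_mem_support (by rw [← hwd]; exact hwM) with h1 | h1
          · exact hdu h1
          · exact hdv h1
        have huq : u ∉ q.support := by
          intro hu
          exact ((Walk.cons_isPath_iff h _).mp hMpath).2 (hq ▸ support_sub_concat q e hu)
        have hvq : v ∉ q.support := by
          intro hv
          rw [Walk.concat_eq_append] at hqe
          have h2 := (isPath_decomp hqe).2.2 v hv (by simp)
          exact (G.ne_of_adj e) h2.symm
        have hμ3 : S3.length + 3 ≤ μ := by
          simp only [Walk.length_cons] at hμ; omega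
        -- the move
        refine fwin_mono (by omega) (fwin_move (n := (μ - 2) + NN + 2)
          (Or.inr h) (Or.inr e.symm) hcd hwd ?_)
        intro d' hstep hd'c hd'w
        obtain ⟨Wstep, hWsl, hWss⟩ := walk_of_step hstep
        set W' := W.append Wstep with hW'
        have hW'len : W'.length ≤ PL.length + 1 := by
          rw [hW', Walk.length_append]; omega
        have hpath' : ((PL.concat h).append (q.append (Walk.cons e PR))).IsPath := by
          rw [reassemble PL h q e PR, ← hq]
          exact hpath
        have hpp' : pp ∉ ((PL.concat h).append (q.append (Walk.cons e PR))).support := by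
          rw [reassemble PL h q e PR, ← hq]
          exact hpp
        have hlr' : (PL.concat h).length = (Walk.cons e PR).length := by
          rw [Walk.length_concat, Walk.length_cons]; omega
        have hsum' : (PL.concat h).length + q.length + (Walk.cons e PR).length = Qlen := by
          rw [Walk.length_concat, Walk.length_cons]
          simp only [Walk.length_cons] at hsum
          omega
        have hW'cond : ∀ x ∈ W'.support, x ∈ q.support → x = c ∨ x = w ∨ x = d' := by
          intro x hx hxq
          rw [hW', Walk.mem_support_append_iff] at hx
          rcases hx with hx | hx
          · rcases hWM x hx (hqsubM x hxq) with h1 | h1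
            · exact absurd (h1 ▸ hxq) huq
            · exact absurd (h1 ▸ hxq) hvq
          · rcases hWss x hx with rfl | rfl
            · rcases hWM x W.end_mem_support (hqsubM x hxq) with h1 | h1
              · exact absurd (h1 ▸ hxq) huq
              · exact absurd (h1 ▸ hxq) hvq
            · exact Or.inr (Or.inr rfl)
        by_cases hentry : d' ∈ q.support
        · -- handed to the endgame
          have := HANDLER (PL.concat h) q (Walk.cons e PR) W' hpath' hpp'
            hlr' (by rw [Walk.length_concat]; exact hW'len) hsum' hentry hd'c hd'w hW'cond
          exact fwin_mono (by omega) this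
        · -- continue squeezing
          have hWM' : ∀ x ∈ W'.support, x ∈ q.support → x = c ∨ x = w := by
            intro x hx hxq
            rcases hW'cond x hx hxq with h1 | h1 | h1
            · exact Or.inl h1
            · exact Or.inr h1
            · exact absurd (h1 ▸ hxq) hentry
          have hrec := ih (μ - 2) (by simp only [Walk.length_cons] at hμ; omega)
            (PL.concat h) q (Walk.cons e PR) W'
            (by simp only [Walk.length_cons] at hμ; omega)
            hpath' hpp' hlr' (by rw [Walk.length_concat]; exact hW'len) hsum' hd'c hd'w hWM'
          exact hrec

end RendezvousAux

namespace RendezvousAux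

variable {V : Type*} {G : SimpleGraph V}

/-- Plan B at a stubborn pin: one agent marches along the corridor `ρ` towards the
pinned Divider agent sitting at `g`, while the other agent guards `z`.  If Divider
ever leaves `g`, the guard grabs `g` and the two agents squeeze the corridor. -/
lemma march2c {N k : ℕ} {xx g z : V}
    (e₁ : G.Adj xx g) (e₂ : G.Adj g z)
    (ρ : G.Walk xx g) (hρ : ρ.IsPath) (hρk : ρ.length ≤ k + 1)
    (hpin : ∀ (x' y' z' : V), G.Adj x' y' → G.Adj y' z' → ∀ (RT : G.Walk x' z'),
        y' ∉ RT.support → RT.length ≤ k → FWin G N x' z' {y'})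
    (HBASE : ∀ {z' : V} (f : G.Adj z' g) (Rpre : G.Walk xx z'), Rpre.concat f = ρ →
        FWin G N z' z {g}) :
    ∀ (n : ℕ) {curL : V} (Rpre : G.Walk xx curL) (R : G.Walk curL g),
      R.length ≤ n → 1 ≤ R.length → Rpre.append R = ρ →
      FWin G (2*n + (k + N + 4)) curL z {g} := by
  intro n
  induction n with
  | zero =>
    intro curL Rpre R h1 h2 _
    omega
  | succ n ih =>
    intro curL Rpre R hRn hR1 heq
    have hRpath : R.IsPath := by
      have : (Rpre.append R).IsPath := by rw [heq]; exact hρ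
      exact (isPath_decomp this).2.1
    cases R with
    | nil => simp at hR1
    | @cons _ nxt _ fstep R' =>
      cases R' with
      | nil =>
        -- base: curL is adjacent to g; apply the stubborn-pin continuation
        have hbase := HBASE fstep Rpre (by rw [Walk.concat_eq_append]; exact heq)
        exact fwin_mono (by omega) hbase
      | @cons _ nxt₂ _ fstep₂ R₂ =>
        classical
        set R' := Walk.cons fstep₂ R₂ with hR'
        have hR'path : R'.IsPath := hRpath.of_cons
        have hnxtg : nxt ≠ g := ne_of_isPath_pos hR'path (by rw [hR']; simp)
        have hzg : z ≠ g := (G.ne_of_adj e₂).symm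
        by_cases hnz : nxt = z
        · -- collision with the guard: meet immediately
          subst hnz
          exact fwin_mono (by omega) (fwin_meet (Or.inr fstep) (Or.inl rfl) hzg)
        · -- normal step of the march
          refine fwin_mono (by omega)
            (fwin_move (n := 2*n + (k + N + 4)) (Or.inr fstep) (Or.inl rfl) hnxtg hzg ?_)
          intro d' hstep hd'nxt hd'z
          by_cases hd'g : d' = g
          · -- Divider stays at g: continue the march
            subst hd'g
            have heq' : (Rpre.concat fstep).append R' = ρ := by
              rw [Walk.concat_append]; exact heq
            exact ih (Rpre.concat fstep) R' (by
              have h5 := hRn; rw [hR'] at *; simp only [Walk.length_cons] at h5 ⊢; omega)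
              (by rw [hR']; simp) heq'
          · -- Divider left g: grab g with the guard and squeeze the corridor
            refine fwin_mono (by omega)
              (fwin_move (n := k + N + 2) (Or.inl rfl) (Or.inr e₂.symm)
                (Ne.symm hd'nxt) (fun h => hd'g h.symm) ?_)
            intro d'' _ hd''nxt hd''g
            have heq' : (Rpre.concat fstep).append R' = ρ := by
              rw [Walk.concat_append]; exact heq
            have hlenρ : (Rpre.concat fstep).length + R'.length = ρ.length := by
              rw [← heq', Walk.length_append]
            have hcpos : 1 ≤ (Rpre.concat fstep).length := by
              rw [Walk.length_concat]; omega
            refine sqz2 k R' (by omega) hR'path ?_ d'' hd''nxt hd''g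
            -- pins during the corridor squeeze
            intro x' y' z'' f₁ f₂ T₁ T₂ hdec
            have hρdec : ρ = ((Rpre.concat fstep).append T₁).append
                (Walk.cons f₁ (Walk.cons f₂ T₂)) := by
              rw [← heq', hdec, Walk.append_assoc]
            -- route around the corridor using the closing edge e₁
            set RT := T₁.reverse.append (((Rpre.concat fstep).reverse).append
              (Walk.cons e₁ T₂.reverse)) with hRT
            have hρ2 : (((Rpre.concat fstep).append T₁).append
                (Walk.cons f₁ (Walk.cons f₂ T₂))).IsPath := by rw [← hρdec]; exact hρ
            have hfacts := isPath_decomp hρ2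
            have hpre : ((Rpre.concat fstep).append T₁).IsPath := hfacts.1
            have hprefacts := isPath_decomp hpre
            have hmid := hfacts.2.2
            have htail : (Walk.cons f₁ (Walk.cons f₂ T₂)).IsPath := hfacts.2.1
            have hy'T₂ : y' ∉ T₂.support :=
              ((Walk.cons_isPath_iff _ _).mp ((Walk.cons_isPath_iff _ _).mp htail).1).2
            have hy'mem : y' ∈ (Walk.cons f₁ (Walk.cons f₂ T₂)).support := by simp
            have hy'pre : y' ∉ ((Rpre.concat fstep).append T₁).support := by
              intro hy
              have hx' := hmid y' hy hy'mem
              exact (G.ne_of_adj f₁) hx'.symm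
            have hy'T₁ : y' ∉ T₁.support := by
              intro hy
              apply hy'pre
              rw [Walk.mem_support_append_iff]; exact Or.inr hy
            have hy'R : y' ∉ (Rpre.concat fstep).support := by
              intro hy
              apply hy'pre
              rw [Walk.mem_support_append_iff]; exact Or.inl hy
            have hy'g : y' ≠ g := by
              intro h
              exact hy'T₂ (h ▸ T₂.end_mem_support)
            have havoid : y' ∉ RT.support := by
              rw [hRT]
              intro hy
              rw [Walk.mem_support_append_iff] at hy
              rcases hy with hy | hy
              · rw [Walk.support_reverse, List.mem_reverse] at hy
                exact hy'T₁ hy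
              · rw [Walk.mem_support_append_iff] at hy
                rcases hy with hy | hy
                · rw [Walk.support_reverse, List.mem_reverse] at hy
                  exact hy'R hy
                · rw [Walk.support_cons, List.mem_cons] at hy
                  rcases hy with hy | hy
                  · exact hy'R (hy ▸ (Rpre.concat fstep).start_mem_support)
                  · rw [Walk.support_reverse, List.mem_reverse] at hy
                    exact hy'T₂ hy
            have hRTlen : RT.length ≤ k := by
              have hdl := congrArg Walk.length hdec
              simp only [Walk.length_cons, Walk.length_append] at hdl
              rw [hRT]
              simp only [Walk.length_append, Walk.length_reverse, Walk.length_cons]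
              omega
            exact hpin x' y' z'' f₁ f₂ RT havoid hRTlen

end RendezvousAux

namespace RendezvousAux

variable {V : Type*} {G : SimpleGraph V}

/-- The endgame: after Divider's agent has entered the middle path at `g` (with its
travel walk `W` recorded), Facilitator wins provided every strictly shorter pin
configuration is already winning (`hpin`). -/
lemma endgame {N k : ℕ}
    (hpin : ∀ (x' y' z' : V), G.Adj x' y' → G.Adj y' z' → ∀ (RT : G.Walk x' z'),
        y' ∉ RT.support → RT.length ≤ k → FWin G N x' z' {y'}) :
    ∀ {A B u v pp g : V} (hpA : G.Adj pp A) (hpB : G.Adj pp B)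
      (PL : G.Walk A u) (M : G.Walk u v) (PR : G.Walk v B) (W : G.Walk pp g),
      (PL.append (M.append PR)).IsPath →
      pp ∉ (PL.append (M.append PR)).support →
      PL.length = PR.length → W.length ≤ PL.length →
      PL.length + M.length + PR.length ≤ k + 1 →
      g ∈ M.support → g ≠ u → g ≠ v →
      (∀ x ∈ W.support, x ∈ M.support → x = u ∨ x = v ∨ x = g) →
      FWin G ((k+1) + (4*k + 2*N + 10) + 2) u v {g} := by
  intro A B u v pp g hpA hpB PL M PR W hpath hpp hlr hWlen hsum hgM hgu hgv hWM
  classical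
  have hMPR : (M.append PR).IsPath := (isPath_decomp hpath).2.1
  have hMpath : M.IsPath := (isPath_decomp hMPR).1
  have hMlen : M.length ≤ k + 1 := by omega
  refine sqz2 (N := 4*k + 2*N + 10) (k+1) M hMlen hMpath ?_ g hgu hgv
  intro x y z e₁ e₂ SL SR heq
  have hMiso : (SL.append (Walk.cons e₁ (Walk.cons e₂ SR))).IsPath := heq ▸ hMpath
  have hd1 := isPath_decomp hMiso
  have hSLpath : SL.IsPath := hd1.1
  have hrest : (Walk.cons e₁ (Walk.cons e₂ SR)).IsPath := hd1.2.1
  have hmidSL := hd1.2.2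
  have hySL : y ∉ SL.support := fun hy => (G.ne_of_adj e₁) (hmidSL y hy (by simp)).symm
  have hSR2 : (Walk.cons e₂ SR).IsPath := ((Walk.cons_isPath_iff _ _).mp hrest).1
  have hySR : y ∉ SR.support := ((Walk.cons_isPath_iff _ _).mp hSR2).2
  have hSRpath : SR.IsPath := ((Walk.cons_isPath_iff _ _).mp hSR2).1
  have hyM : y ∈ M.support := by
    rw [heq, Walk.mem_support_append_iff]; exact Or.inr (by simp)
  have hyu : y ≠ u := fun h => hySL (h ▸ SL.start_mem_support)
  have hyv : y ≠ v := fun h => hySR (h ▸ SR.end_mem_support)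
  have hmidPL := (isPath_decomp hpath).2.2
  have hyPL : y ∉ PL.support := by
    intro hy
    exact hyu (hmidPL y hy (by rw [Walk.mem_support_append_iff]; exact Or.inl hyM))
  have hmidMPR := (isPath_decomp hMPR).2.2
  have hyPR : y ∉ PR.support := fun hy => hyv (hmidMPR y hyM hy)
  have hyTOT : y ∈ (PL.append (M.append PR)).support := by
    rw [Walk.mem_support_append_iff]
    exact Or.inr (by rw [Walk.mem_support_append_iff]; exact Or.inl hyM)
  have hypp : y ≠ pp := fun h => hpp (h ▸ hyTOT)
  have hMlen2 : SL.length + SR.length + 2 = M.length := by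
    have h0 := congrArg Walk.length heq
    simp only [Walk.length_append, Walk.length_cons] at h0
    omega
  have hgloc : g ∈ SL.support ∨ g = y ∨ g ∈ SR.support := by
    rw [heq, Walk.mem_support_append_iff] at hgM
    rcases hgM with h | h
    · exact Or.inl h
    · rw [Walk.support_cons, List.mem_cons] at h
      rcases h with h | h
      · exact Or.inl (h ▸ SL.end_mem_support)
      · rw [Walk.support_cons, List.mem_cons] at h
        rcases h with h | h
        · exact Or.inr (Or.inl h)
        · exact Or.inr (Or.inr h)
  rcases hgloc with hgSL | hgy | hgSR
  · -- pin strictly to the right of g : route through pp and B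
    have hgy' : y ≠ g := fun h => hySL (h ▸ hgSL)
    have hyW : y ∉ W.support := by
      intro hy
      rcases hWM y hy hyM with h | h | h
      exacts [hyu h, hyv h, hgy' h]
    set RT := (SL.dropUntil g hgSL).reverse.append (W.reverse.append
      (Walk.cons hpB (PR.reverse.append SR.reverse))) with hRT
    have havoid : y ∉ RT.support := by
      rw [hRT]
      intro hy
      rw [Walk.mem_support_append_iff] at hy
      rcases hy with hy | hy
      · rw [Walk.support_reverse, List.mem_reverse] at hy
        exact hySL (Walk.support_dropUntil_subset _ hgSL hy)
      · rw [Walk.mem_support_append_iff] at hy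
        rcases hy with hy | hy
        · rw [Walk.support_reverse, List.mem_reverse] at hy
          exact hyW hy
        · rw [Walk.support_cons, List.mem_cons] at hy
          rcases hy with hy | hy
          · exact hypp hy
          · rw [Walk.mem_support_append_iff] at hy
            rcases hy with hy | hy
            · rw [Walk.support_reverse, List.mem_reverse] at hy
              exact hyPR hy
            · rw [Walk.support_reverse, List.mem_reverse] at hy
              exact hySR hy
    have hRTlen : RT.length ≤ k := by
      have h1 : (SL.dropUntil g hgSL).length ≤ SL.length :=
        Walk.length_dropUntil_le SL hgSL
      rw [hRT]
      simp only [Walk.length_append, Walk.length_reverse, Walk.length_cons]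
      omega
    exact fwin_mono (by omega) (hpin x y z e₁ e₂ RT havoid hRTlen)
  · -- the stubborn pin g = y : plan B along the corridor
    subst hgy
    -- g is the pin vertex; rename facts
    set P₁ := W.bypass with hP₁def
    have hP₁path : P₁.IsPath := W.bypass_isPath
    have hP₁len : P₁.length ≤ W.length := W.length_bypass_le
    have hP₁sub : P₁.support ⊆ W.support := W.support_bypass_subset
    have hTOT2 : PL.append (M.append PR) = (PL.append SL).append
        ((Walk.cons e₁ (Walk.cons e₂ SR)).append PR) := by
      rw [heq, ← Walk.append_assoc SL _ PR, Walk.append_assoc PL SL _]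
    have hPLSLp : (PL.append SL).IsPath := (isPath_decomp (hTOT2 ▸ hpath)).1
    have hppPLSL : pp ∉ (PL.append SL).support := by
      intro h
      exact hpp (by rw [hTOT2, Walk.mem_support_append_iff]; exact Or.inl h)
    set leftQP := Walk.cons hpA (PL.append SL) with hlqdef
    have hlqpath : leftQP.IsPath := by
      rw [hlqdef]
      exact (Walk.cons_isPath_iff _ _).mpr ⟨hPLSLp, hppPLSL⟩
    have hyLQ : g ∉ leftQP.support := by
      rw [hlqdef, Walk.support_cons, List.mem_cons]
      rintro (h | h)
      · exact hypp h
      · rw [Walk.mem_support_append_iff] at h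
        rcases h with h | h
        exacts [hyPL h, hySL h]
    obtain ⟨ws, hwsL, P₂, hP₂len, hP₂path, hP₂sub, hP₂last⟩ :=
      exists_last_hit P₁.length P₁ le_rfl hP₁path leftQP.support leftQP.start_mem_support
    have hwsy : ws ≠ g := fun h => hyLQ (h ▸ hwsL)
    have hP₂pos : 0 < P₂.length := by
      rcases Nat.eq_zero_or_pos P₂.length with h | h
      · exact absurd (P₂.eq_of_length_eq_zero h) hwsy
      · exact h
    set D0 := (leftQP.dropUntil ws hwsL).reverse with hD0def
    have hD0path : D0.IsPath := (hlqpath.dropUntil hwsL).reverse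
    have hD0sub : ∀ t ∈ D0.support, t ∈ leftQP.support := by
      intro t ht
      rw [hD0def, Walk.support_reverse, List.mem_reverse] at ht
      exact Walk.support_dropUntil_subset _ hwsL ht
    set ρ := D0.append P₂ with hρdef
    have hρpath : ρ.IsPath := by
      rw [hρdef]
      exact isPath_append_of hD0path hP₂path
        (fun t ht1 ht2 => hP₂last t ht2 (hD0sub t ht1))
    have hρlen : ρ.length ≤ k := by
      have h1 : (leftQP.dropUntil ws hwsL).length ≤ leftQP.length :=
        Walk.length_dropUntil_le _ hwsL
      have h2 : leftQP.length = PL.length + SL.length + 1 := by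
        rw [hlqdef]; simp only [Walk.length_cons, Walk.length_append]
      rw [hρdef]
      simp only [Walk.length_append, hD0def, Walk.length_reverse]
      omega
    have HBASE : ∀ {z' : V} (f : G.Adj z' g) (Rpre : G.Walk x z'), Rpre.concat f = ρ →
        FWin G N z' z {g} := by
      intro z' f Rpre hc
      cases P₂ with
      | nil => simp at hP₂pos
      | @cons _ m2 _ h₂ Ptail =>
        obtain ⟨z₂, P₂₀, f₂, hP₂eq⟩ := Walk.exists_cons_eq_concat h₂ Ptail
        have hρ2 : ρ = (D0.append P₂₀).concat f₂ := by
          rw [hρdef, hP₂eq, Walk.append_concat]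
        rw [hρ2] at hc
        obtain ⟨hv, -⟩ := Walk.concat_inj hc
        subst hv
        have hz₂P₁ : z' ∈ P₁.support := by
          apply hP₂sub
          rw [hP₂eq, Walk.concat_eq_append, Walk.mem_support_append_iff]
          exact Or.inl P₂₀.end_mem_support
        set RT := (P₁.takeUntil z' hz₂P₁).reverse.append
          (Walk.cons hpB (PR.reverse.append SR.reverse)) with hRT2
        have hgtake : g ∉ (P₁.takeUntil z' hz₂P₁).support := by
          intro hg
          have hsplit : ((P₁.takeUntil z' hz₂P₁).append (P₁.dropUntil z' hz₂P₁)).IsPath := by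
            rw [P₁.take_spec hz₂P₁]; exact hP₁path
          have hfacts := isPath_decomp hsplit
          have := hfacts.2.2 g hg (P₁.dropUntil z' hz₂P₁).end_mem_support
          exact (G.ne_of_adj f) this.symm
        have havoid : g ∉ RT.support := by
          rw [hRT2]
          intro hy
          rw [Walk.mem_support_append_iff] at hy
          rcases hy with hy | hy
          · rw [Walk.support_reverse, List.mem_reverse] at hy
            exact hgtake hy
          · rw [Walk.support_cons, List.mem_cons] at hy
            rcases hy with hy | hy
            · exact hypp hy
            · rw [Walk.mem_support_append_iff] at hy
              rcases hy with hy | hy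
              · rw [Walk.support_reverse, List.mem_reverse] at hy
                exact hyPR hy
              · rw [Walk.support_reverse, List.mem_reverse] at hy
                exact hySR hy
        have hRTlen : RT.length ≤ k := by
          have h1 : (P₁.takeUntil z' hz₂P₁).length ≤ P₁.length :=
            Walk.length_takeUntil_le _ hz₂P₁
          rw [hRT2]
          simp only [Walk.length_append, Walk.length_reverse, Walk.length_cons]
          omega
        exact hpin z' g z f e₂ RT havoid hRTlen
    have hρpos : 1 ≤ ρ.length := by
      rw [hρdef, Walk.length_append]; omega
    have hm := march2c e₁ e₂ ρ hρpath (by omega) hpin HBASE ρ.length Walk.nil ρ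
      le_rfl hρpos (Walk.nil_append ρ)
    exact fwin_mono (by omega) hm
  · -- pin strictly to the left of g : route through A and pp
    have hgy' : y ≠ g := fun h => hySR (h ▸ hgSR)
    have hyW : y ∉ W.support := by
      intro hy
      rcases hWM y hy hyM with h | h | h
      exacts [hyu h, hyv h, hgy' h]
    set RT := SL.reverse.append (PL.reverse.append (Walk.cons hpA.symm
      (W.append (SR.takeUntil g hgSR).reverse))) with hRT
    have havoid : y ∉ RT.support := by
      rw [hRT]
      intro hy
      rw [Walk.mem_support_append_iff] at hy
      rcases hy with hy | hy
      · rw [Walk.support_reverse, List.mem_reverse] at hy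
        exact hySL hy
      · rw [Walk.mem_support_append_iff] at hy
        rcases hy with hy | hy
        · rw [Walk.support_reverse, List.mem_reverse] at hy
          exact hyPL hy
        · rw [Walk.support_cons, List.mem_cons] at hy
          rcases hy with hy | hy
          · exact hyPL (hy ▸ PL.start_mem_support)
          · rw [Walk.mem_support_append_iff] at hy
            rcases hy with hy | hy
            · exact hyW hy
            · rw [Walk.support_reverse, List.mem_reverse] at hy
              exact hySR (Walk.support_takeUntil_subset _ hgSR hy)
    have hRTlen : RT.length ≤ k := by
      have h1 : (SR.takeUntil g hgSR).length ≤ SR.length :=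
        Walk.length_takeUntil_le SR hgSR
      rw [hRT]
      simp only [Walk.length_append, Walk.length_reverse, Walk.length_cons]
      omega
    exact fwin_mono (by omega) (hpin x y z e₁ e₂ RT havoid hRTlen)

end RendezvousAux

namespace RendezvousAux

variable {V : Type*} {G : SimpleGraph V}

/-- Budget for the pin lemma. -/
def pinBudget : ℕ → ℕ
  | 0 => 2
  | (k+1) => (k+1) + ((k+1) + (4*k + 2*pinBudget k + 10) + 2) + 2

lemma pinBudget_succ (k : ℕ) :
    pinBudget (k+1) = (k+1) + ((k+1) + (4*k + 2*pinBudget k + 10) + 2) + 2 := rfl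

/-- The pin lemma: if Divider's lone agent sits at `y`, adjacent to both of
Facilitator's agents `x`, `z`, and there is any walk from `x` to `z` avoiding `y`,
then Facilitator wins. Strong induction on the length of the avoiding walk. -/
lemma pin : ∀ (k : ℕ) {x y z : V}, G.Adj x y → G.Adj y z →
    ∀ (R : G.Walk x z), y ∉ R.support → R.length ≤ k → FWin G (pinBudget k) x z {y} := by
  intro k
  induction k with
  | zero =>
    intro x y z e₁ e₂ R hy hlen
    have hxz : x = z := R.eq_of_length_eq_zero (Nat.le_zero.mp hlen)
    subst hxz
    exact fwin_mono (Nat.zero_le _) (fwin_zero.mpr rfl)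
  | succ k ih =>
    intro x y z e₁ e₂ R hy hlen
    classical
    have hQpath : R.bypass.IsPath := R.bypass_isPath
    have hQlen : R.bypass.length ≤ k + 1 := le_trans R.length_bypass_le hlen
    have hQy : y ∉ R.bypass.support := fun h => hy (R.support_bypass_subset h)
    have hpin' : ∀ (x' y' z' : V), G.Adj x' y' → G.Adj y' z' → ∀ (RT : G.Walk x' z'),
        y' ∉ RT.support → RT.length ≤ k → FWin G (pinBudget k) x' z' {y'} :=
      fun x' y' z' h1 h2 RT ha hl => ih h1 h2 RT ha hl
    have hsq := sqz1 (NN := (k+1) + (4*k + 2*pinBudget k + 10) + 2) (Qlen := R.bypass.length)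
      (A := x) (B := z) (pp := y)
      (fun {u' v' g} PL' M' PR' W' hp hppn hlr hwl hsum hg hgu hgv hWc => by
        exact endgame hpin' e₁.symm e₂ PL' M' PR' W' hp hppn hlr hwl (by omega) hg hgu hgv hWc)
      R.bypass.length (PL := Walk.nil) (M := R.bypass) (PR := Walk.nil)
      (W := Walk.nil (u := y))
      le_rfl
      (by rw [Walk.nil_append, Walk.append_nil]; exact hQpath)
      (by rw [Walk.nil_append, Walk.append_nil]; exact hQy)
      rfl (by simp) (by simp)
      (G.ne_of_adj e₁).symm (G.ne_of_adj e₂)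
      (by
        intro t ht htm
        have : t = y := by simpa using ht
        subst this
        exact absurd htm hQy)
    rw [pinBudget_succ]
    exact fwin_mono (by omega) hsq

/-- Extract a uniform length bound for the avoiding walks over the (finitely many)
vertices of a fixed walk. -/
lemma uniform_bound {a b : V}
    (GC : ∀ w : V, w ≠ a → w ≠ b → ∃ p : G.Walk a b, w ∉ p.support) :
    ∀ (L : List V), ∃ K : ℕ, ∀ y ∈ L, y ≠ a → y ≠ b →
      ∃ q : G.Walk a b, y ∉ q.support ∧ q.length ≤ K := by
  intro L
  induction L with
  | nil => exact ⟨0, by simp⟩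
  | cons y0 L' ihL =>
    obtain ⟨K', hK'⟩ := ihL
    classical
    by_cases hy0 : y0 ≠ a ∧ y0 ≠ b
    · obtain ⟨q0, hq0⟩ := GC y0 hy0.1 hy0.2
      refine ⟨max K' q0.length, ?_⟩
      intro y hy hya hyb
      rcases List.mem_cons.mp hy with rfl | hy
      · exact ⟨q0, hq0, le_max_right _ _⟩
      · obtain ⟨q, h1, h2⟩ := hK' y hy hya hyb
        exact ⟨q, h1, le_trans h2 (le_max_left _ _)⟩
    · refine ⟨K', ?_⟩
      intro y hy hya hyb
      rcases List.mem_cons.mp hy with rfl | hy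
      · exact absurd ⟨hya, hyb⟩ hy0
      · exact hK' y hy hya hyb

/-- The outer squeeze: given any walk between the agents and the separator-freeness
condition, Facilitator wins against one Divider agent. -/
lemma outer {a b d : V} (hda : d ≠ a) (hdb : d ≠ b)
    (GC : ∀ w : V, w ≠ a → w ≠ b → ∃ p : G.Walk a b, w ∉ p.support)
    (P0 : G.Walk a b) : ∃ n, FWin G n a b {d} := by
  classical
  set P := P0.bypass with hP
  obtain ⟨K, hK⟩ := uniform_bound GC P.support
  refine ⟨P.length + pinBudget (P.length + K) + 2, ?_⟩
  refine sqz2 P.length P le_rfl P0.bypass_isPath ?_ d hda hdb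
  intro x y z e₁ e₂ S₁ S₂ hdec
  have hPiso : (S₁.append (Walk.cons e₁ (Walk.cons e₂ S₂))).IsPath := hdec ▸ P0.bypass_isPath
  have hd1 := isPath_decomp hPiso
  have hyS₁ : y ∉ S₁.support := fun hy => (G.ne_of_adj e₁) (hd1.2.2 y hy (by simp)).symm
  have hrest := hd1.2.1
  have hyS₂ : y ∉ S₂.support :=
    ((Walk.cons_isPath_iff _ _).mp ((Walk.cons_isPath_iff _ _).mp hrest).1).2
  have hya : y ≠ a := fun h => hyS₁ (h ▸ S₁.start_mem_support)
  have hyb : y ≠ b := fun h => hyS₂ (h ▸ S₂.end_mem_support)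
  have hyP : y ∈ P.support := by
    rw [hdec, Walk.mem_support_append_iff]; exact Or.inr (by simp)
  obtain ⟨q, hqy, hqK⟩ := hK y hyP hya hyb
  set RT := S₁.reverse.append (q.append S₂.reverse) with hRT
  have havoid : y ∉ RT.support := by
    rw [hRT]
    intro hy
    rw [Walk.mem_support_append_iff] at hy
    rcases hy with hy | hy
    · rw [Walk.support_reverse, List.mem_reverse] at hy
      exact hyS₁ hy
    · rw [Walk.mem_support_append_iff] at hy
      rcases hy with hy | hy
      · exact hqy hy
      · rw [Walk.support_reverse, List.mem_reverse] at hy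
        exact hyS₂ hy
  have hRTlen : RT.length ≤ P.length + K := by
    have h0 := congrArg Walk.length hdec
    simp only [Walk.length_append, Walk.length_cons] at h0
    rw [hRT]
    simp only [Walk.length_append, Walk.length_reverse]
    omega
  exact pin (P.length + K) e₁ e₂ RT havoid hRTlen

end RendezvousAux

namespace RendezvousAux

variable {V : Type*} {G : SimpleGraph V}

lemma exists_separator_of_dividerWins_one {s t : V} (hconn : G.Connected) (hst : s ≠ t)
    (hadj : ¬ G.Adj s t) (h : DividerWins G s t 1) :
    ∃ v : V, IsSeparator G s t {v} := by
  by_contra hno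
  push_neg at hno
  have GC : ∀ w : V, w ≠ s → w ≠ t → ∃ p : G.Walk s t, w ∉ p.support := by
    intro w hws hwt
    have hns := hno w
    rw [IsSeparator] at hns
    push_neg at hns
    have h1 : s ∉ ({w} : Finset V) := by simp [Ne.symm hws]
    have h2 : t ∉ ({w} : Finset V) := by simp [Ne.symm hwt]
    obtain ⟨p, hp⟩ := hns h1 h2
    exact ⟨p, fun hw => (hp w hw) (Finset.mem_singleton_self w)⟩
  obtain ⟨D, hcard, hsD, htD, hn⟩ := h
  obtain ⟨v₀, rfl⟩ := Multiset.card_eq_one.mp hcard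
  simp only [Multiset.mem_singleton] at hsD htD
  obtain ⟨p0⟩ := hconn.preconnected s t
  obtain ⟨n, hFW⟩ := outer (fun hh => hsD hh.symm) (fun hh => htD hh.symm) GC p0
  exact hn n hFW

end RendezvousAux


namespace RendezvousAux

variable {V : Type*} {G : SimpleGraph V}

/-- `v` hits every walk from `a` to `b`. -/
def VSep (G : SimpleGraph V) (v a b : V) : Prop := ∀ p : G.Walk a b, v ∈ p.support

lemma VSep.ne {v a b : V} (h : VSep G v a b) (ha : a ≠ v) : a ≠ b := by
  rintro rfl
  have := h SimpleGraph.Walk.nil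
  simp at this
  exact ha this.symm

lemma VSep.step {v a b a' b' : V} (h : VSep G v a b) (ha : a ≠ v) (hb : b ≠ v)
    (ha' : a' ≠ v) (hb' : b' ≠ v) (sa : Step G a a') (sb : Step G b b') :
    VSep G v a' b' := by
  intro q
  obtain ⟨p₁, -, hp₁⟩ := walk_of_step sa
  obtain ⟨p₂, -, hp₂⟩ := walk_of_step (step_symm sb)
  have hv := h (p₁.append (q.append p₂))
  rw [SimpleGraph.Walk.mem_support_append_iff, SimpleGraph.Walk.mem_support_append_iff] at hv
  rcases hv with h1 | h2 | h3
  · rcases hp₁ v h1 with rfl | rfl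
    · exact absurd rfl ha
    · exact absurd rfl ha'
  · exact h2
  · rcases hp₂ v h3 with rfl | rfl
    · exact absurd rfl hb'
    · exact absurd rfl hb

lemma not_fwin_of_vsep (v : V) :
    ∀ (n : ℕ) (a b : V), a ≠ v → b ≠ v → VSep G v a b → ¬ FWin G n a b {v} := by
  intro n
  induction n with
  | zero =>
    intro a b ha _ hsep h
    exact (hsep.ne ha) (fwin_zero.mp h)
  | succ n ih =>
    intro a b ha hb hsep h
    rcases fwin_succ.mp h with rfl | ⟨a', b', sa, sb, ha', hb', hcase⟩
    · exact (hsep.ne ha) rfl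
    · have ha'v : a' ≠ v := by simpa using ha'
      have hb'v : b' ≠ v := by simpa using hb'
      have hsep' := hsep.step ha hb ha'v hb'v sa sb
      rcases hcase with rfl | hall
      · exact (hsep'.ne ha'v) rfl
      · have hM : MAdj G {v} {v} := by
          rw [MAdj, ← Multiset.cons_zero v]
          exact Multiset.Rel.cons (Or.inl rfl) Multiset.Rel.zero
        exact ih a' b' ha'v hb'v hsep' (hall {v} hM ha' hb')

lemma vsep_of_separator {s t v : V} (h : IsSeparator G s t {v}) : VSep G v s t := by
  intro p
  obtain ⟨x, hx, hxv⟩ := h.2.2 p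
  simp only [Finset.mem_singleton] at hxv
  subst hxv
  exact hx

lemma dividerWins_one {s t v : V} (hs : s ≠ v) (ht : t ≠ v) (hsep : VSep G v s t) :
    DividerWins G s t 1 := by
  refine ⟨{v}, by simp, ?_, ?_, fun n => not_fwin_of_vsep v n s t hs ht hsep⟩
  · simpa using hs
  · simpa using ht

lemma fwin_of_walk : ∀ {a b : V} (p : G.Walk a b), FWin G p.length a b 0 := by
  intro a b p
  induction p with
  | nil => exact rfl
  | @cons a c b h p ih =>
    rw [SimpleGraph.Walk.length_cons]
    refine fwin_succ.mpr (Or.inr ⟨c, b, Or.inr h, Or.inl rfl, by simp, by simp, Or.inr ?_⟩)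
    intro D' hD' _ _
    have : D' = 0 := Multiset.rel_zero_left.mp hD'
    subst this
    exact ih

lemma not_dividerWins_zero {s t : V} (hconn : G.Connected) : ¬ DividerWins G s t 0 := by
  rintro ⟨D, hcard, -, -, hn⟩
  rw [Multiset.card_eq_zero] at hcard
  subst hcard
  obtain ⟨p⟩ := hconn.preconnected s t
  exact hn p.length (fwin_of_walk p)

lemma separator_card_ne_zero {s t : V} (hconn : G.Connected) {S : Finset V}
    (hS : IsSeparator G s t S) : S.card ≠ 0 := by
  obtain ⟨p⟩ := hconn.preconnected s t
  obtain ⟨x, _, hxS⟩ := hS.2.2 p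
  exact Finset.card_ne_zero_of_mem hxS

end RendezvousAux

open RendezvousAux

/-- for a connected graph `G` and distinct nonadjacent vertices `s`, `t`,
`d_G(s,t) = 1` if and only if `λ_G(s,t) = 1`. -/
theorem dNum_eq_one_iff_lambda_eq_one {V : Type*} (G : SimpleGraph V)
    (hconn : G.Connected) (s t : V) (hst : s ≠ t) (hadj : ¬ G.Adj s t) :
    dNum G s t = 1 ↔ lambdaNum G s t = 1 := by
  constructor
  · intro h
    have hDW : DividerWins G s t 1 := by
      by_contra hDW
      have h2 : (2 : ℕ∞) ≤ dNum G s t := by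
        refine le_sInf ?_
        rintro x ⟨k, rfl, hk⟩
        have hk0 : k ≠ 0 := by rintro rfl; exact not_dividerWins_zero hconn hk
        have hk1 : k ≠ 1 := by rintro rfl; exact hDW hk
        have h2k : 2 ≤ k := by omega
        exact_mod_cast h2k
      rw [h] at h2
      norm_num at h2
    obtain ⟨v, hsep⟩ := exists_separator_of_dividerWins_one hconn hst hadj hDW
    apply le_antisymm
    · apply sInf_le
      exact ⟨{v}, by simp, hsep⟩
    · refine le_sInf ?_
      rintro x ⟨S, rfl, hS⟩
      have h0 : S.card ≠ 0 := separator_card_ne_zero hconn hS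
      have h1 : 1 ≤ S.card := Nat.one_le_iff_ne_zero.mpr h0
      exact_mod_cast h1
  · intro h
    have hex : ∃ S : Finset V, S.card = 1 ∧ IsSeparator G s t S := by
      by_contra hne
      push_neg at hne
      have h2 : (2 : ℕ∞) ≤ lambdaNum G s t := by
        refine le_sInf ?_
        rintro x ⟨S, rfl, hS⟩
        have h0 : S.card ≠ 0 := separator_card_ne_zero hconn hS
        have h1 : S.card ≠ 1 := fun hc => hne S hc hS
        have h2k : 2 ≤ S.card := by omega
        exact_mod_cast h2k
      rw [h] at h2
      norm_num at h2
    obtain ⟨S, hcard, hsep⟩ := hex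
    obtain ⟨v, rfl⟩ := Finset.card_eq_one.mp hcard
    have hs : s ≠ v := fun hh => hsep.1 (by simp [hh])
    have ht : t ≠ v := fun hh => hsep.2.1 (by simp [hh])
    have hDW : DividerWins G s t 1 := dividerWins_one hs ht (vsep_of_separator hsep)
    apply le_antisymm
    · apply sInf_le
      exact ⟨1, by norm_num, hDW⟩
    · refine le_sInf ?_
      rintro x ⟨k, rfl, hk⟩
      have hk0 : k ≠ 0 := by rintro rfl; exact not_dividerWins_zero hconn hk
      have h1 : 1 ≤ k := Nat.one_le_iff_ne_zero.mpr hk0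
      exact_mod_cast h1
end

section
/- If the two agents R and J of Facilitator occupy vertices of a cycle C of a graph G, the cycle C has a shortcut, and Divider has a single agent, then Facilitator has a strategy ensuring that within at most ℓ(C) moves, R and J occupy vertices of a cycle C' with ℓ(C') < ℓ(C). -/
namespace Rendezvous

variable {V : Type*}

/-- A cycle `c` of `G` has a shortcut: for some distinct `u, v ∈ V(c)` there is a
`(u,v)`-path in `G − (V(c) \ {u,v})` strictly shorter than both internally
vertex-disjoint `(u,v)`-paths of `c` (equivalently, shorter than their minimum,
the distance between `u` and `v` in the cycle). -/
def HasShortcut (G : SimpleGraph V) {x : V} (c : G.Walk x x) : Prop :=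
  ∃ (u v : V) (hu : u ∈ c.toSubgraph.verts) (hv : v ∈ c.toSubgraph.verts), u ≠ v ∧
    ∃ p : G.Walk u v, p.IsPath ∧
      (∀ w ∈ p.support, w ∈ c.toSubgraph.verts → w = u ∨ w = v) ∧
      p.length < c.toSubgraph.coe.dist ⟨u, hu⟩ ⟨v, hv⟩

/-- `FForce G goal n a b D`: Facilitator (moving first, agents at `a`, `b`, Divider's
agents at `D`) can force a position satisfying `goal` within at most `n` of his moves. -/
def FForce (G : SimpleGraph V) (goal : V → V → Prop) : ℕ → V → V → Multiset V → Prop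
  | 0, a, b, _ => goal a b
  | n + 1, a, b, D => goal a b ∨ ∃ a' b', Step G a a' ∧ Step G b b' ∧ a' ∉ D ∧ b' ∉ D ∧
      (goal a' b' ∨ ∀ D', MAdj G D D' → a' ∉ D' → b' ∉ D' → FForce G goal n a' b' D')

end Rendezvous

open Rendezvous


section Aux

open SimpleGraph Walk

namespace Rendezvous

variable {V : Type*} {G : SimpleGraph V}

lemma goal_imp_fforce {goal : V → V → Prop} {a b : V} {D : Multiset V}
    (h : goal a b) : ∀ n, FForce G goal n a b D
  | 0 => h
  | _ + 1 => Or.inl h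

lemma exists_coe_walk (H : G.Subgraph) :
    ∀ {x y : V} (w : G.Walk x y), w.toSubgraph ≤ H → ∀ (hx : x ∈ H.verts) (hy : y ∈ H.verts),
      ∃ w' : H.coe.Walk ⟨x, hx⟩ ⟨y, hy⟩, w'.length = w.length := by
  intro x y w
  induction w with
  | nil => intro _ hx hy; exact ⟨.nil, rfl⟩
  | @cons x z y hadj w ih =>
    intro hle hx hy
    have hwle : w.toSubgraph ≤ H := by simp at hle; exact hle.2
    have hz : z ∈ H.verts := hwle.1 w.start_mem_verts_toSubgraph
    have hHadj : H.Adj x z := hle.2 (by simp)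
    obtain ⟨w', hw'⟩ := ih hwle hz hy
    exact ⟨.cons (by simpa using hHadj) w', by simp [hw']⟩

lemma fforce_of_walks {goal : V → V → Prop} :
    ∀ (n : ℕ) {a b t₁ t₂ : V} (q1 : G.Walk a t₁) (q2 : G.Walk b t₂) (D : Multiset V),
      Multiset.card D = 1 → q1.length + q2.length ≤ n →
      (∀ z ∈ q1.support, ∀ w ∈ q2.support, z ≠ w) →
      (∀ w ∈ q2.support, goal t₁ w) →
      (∀ z ∈ q1.support, goal z t₂) →
      a ∉ D → b ∉ D → FForce G goal n a b D := by
  intro n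
  induction n with
  | zero =>
    intro a b t₁ t₂ q1 q2 D hD hlen hdisj hg1 hg2 haD hbD
    cases q1 with
    | nil => exact hg1 b q2.start_mem_support
    | cons h1 q1' => simp at hlen
  | succ n ih =>
    intro a b t₁ t₂ q1 q2 D hD hlen hdisj hg1 hg2 haD hbD
    cases q1 with
    | nil => exact goal_imp_fforce (hg1 b q2.start_mem_support) _
    | @cons a a₁ t₁ h1 q1' =>
      cases q2 with
      | nil => exact goal_imp_fforce (hg2 a (Walk.start_mem_support _)) _
      | @cons b b₁ t₂ h2 q2' =>
        obtain ⟨d, rfl⟩ := Multiset.card_eq_one.mp hD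
        have ha₁mem : a₁ ∈ (Walk.cons h1 q1').support := by simp
        have hb₁mem : b₁ ∈ (Walk.cons h2 q2').support := by simp
        have hab : a₁ ≠ b₁ := hdisj a₁ ha₁mem b₁ hb₁mem
        by_cases hblock : a₁ = d
        · -- a is blocked; move b one step
          refine Or.inr ⟨a, b₁, Or.inl rfl, Or.inr h2, haD, ?_, Or.inr ?_⟩
          · simp only [Multiset.mem_singleton]
            exact fun hbd => hab (hblock.trans hbd.symm)
          · intro D' hrel ha' hb'
            refine ih (Walk.cons h1 q1') q2' D' ?_ ?_ ?_ ?_ ?_ ha' hb'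
            · rw [← Multiset.card_eq_card_of_rel hrel]; simp
            · simp only [Walk.length_cons] at hlen ⊢; omega
            · intro z hz w hw
              exact hdisj z hz w (by simp [hw])
            · intro w hw; exact hg1 w (by simp [hw])
            · exact hg2
        · -- a is not blocked; move a one step
          refine Or.inr ⟨a₁, b, Or.inr h1, Or.inl rfl, by simpa using hblock, hbD, Or.inr ?_⟩
          intro D' hrel ha' hb'
          refine ih q1' (Walk.cons h2 q2') D' ?_ ?_ ?_ ?_ ?_ ha' hb'
          · rw [← Multiset.card_eq_card_of_rel hrel]; simp
          · simp only [Walk.length_cons] at hlen ⊢; omega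
          · intro z hz w hw
            exact hdisj z (by simp [hz]) w hw
          · exact hg1
          · intro z hz; exact hg2 z (by simp [hz])

lemma append_isCycle {u v : V} (huv : u ≠ v)
    {p : G.Walk u v} {q : G.Walk v u} (hp : p.IsPath) (hq : q.IsPath)
    (hlen : 3 ≤ p.length + q.length)
    (hdisj : ∀ w, w ∈ p.support → w ∈ q.support → w = u ∨ w = v) :
    (p.append q).IsCycle := by
  cases p with
  | nil => exact absurd rfl huv
  | @cons u x₁ v h p' =>
    rw [Walk.cons_append, Walk.cons_isCycle_iff]
    obtain ⟨hp', hup'⟩ := (Walk.cons_isPath_iff _ _).mp hp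
    have hvq : v ∉ q.support.tail := by
      have hnd := hq.support_nodup
      rw [q.support_eq_cons] at hnd
      exact (List.nodup_cons.mp hnd).1
    constructor
    · rw [Walk.isPath_def, Walk.support_append]
      refine List.Nodup.append hp'.support_nodup
        (List.Nodup.sublist (List.tail_sublist _) hq.support_nodup) ?_
      intro w hw hw'
      have hwp : w ∈ (Walk.cons h p').support := by simp [hw]
      have hwq : w ∈ q.support := List.mem_of_mem_tail hw'
      rcases hdisj w hwp hwq with rfl | rfl
      · exact hup' hw
      · exact hvq hw'
    · intro he
      rw [Walk.edges_append, List.mem_append] at he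
      rcases he with he | he
      · exact hup' (Walk.fst_mem_support_of_mem_edges p' he)
      · have hx₁q : x₁ ∈ q.support := Walk.snd_mem_support_of_mem_edges q he
        have hx₁p : x₁ ∈ (Walk.cons h p').support := by simp
        rcases hdisj x₁ hx₁p hx₁q with rfl | rfl
        · exact h.ne rfl
        · have hp'nil : p' = Walk.nil := Walk.isPath_iff_eq_nil.mp hp'
          cases q with
          | nil => exact huv rfl
          | @cons v y u h2 q2 =>
            obtain ⟨hq2, hvq2⟩ := (Walk.cons_isPath_iff _ _).mp hq
            rw [Walk.edges_cons, List.mem_cons] at he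
            rcases he with he | he
            · have hyu : u = y := by
                rw [Sym2.eq_iff] at he
                rcases he with ⟨h1', _⟩ | ⟨h1', _⟩
                · exact absurd h1' huv
                · exact h1'
              subst hyu
              have hq2nil : q2 = Walk.nil := Walk.isPath_iff_eq_nil.mp hq2
              subst hp'nil; subst hq2nil
              simp at hlen
            · exact hvq2 (Walk.snd_mem_support_of_mem_edges q2 he)

end Rendezvous

end Aux

/-- if Facilitator's agents `R`, `J` occupy vertices `a`, `b` of a cycle
`c` of `G` that has a shortcut, and Divider has a single agent, then Facilitator has a
strategy ensuring that within at most `ℓ(c)` moves his agents occupy vertices of a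
cycle `c'` with `ℓ(c') < ℓ(c)`. -/
theorem facilitator_reaches_shorter_cycle {V : Type*} (G : SimpleGraph V)
    {x : V} (c : G.Walk x x) (hc : c.IsCycle) (hsc : HasShortcut G c)
    (a b : V) (ha : a ∈ c.toSubgraph.verts) (hb : b ∈ c.toSubgraph.verts)
    (D : Multiset V) (hD : Multiset.card D = 1) (haD : a ∉ D) (hbD : b ∉ D) :
    FForce G
      (fun a' b' => ∃ (y : V) (c' : G.Walk y y), c'.IsCycle ∧ c'.length < c.length ∧
        a' ∈ c'.toSubgraph.verts ∧ b' ∈ c'.toSubgraph.verts)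
      c.length a b D := by
  classical
  obtain ⟨u, v, hu, hv, huv, p, hp, hpint, hplt⟩ := hsc
  have huc : u ∈ c.support := (c.mem_verts_toSubgraph).mp hu
  have hcyc1 : (c.rotate u huc).IsCycle := hc.rotate huc
  have htsg : (c.rotate u huc).toSubgraph = c.toSubgraph := c.toSubgraph_rotate huc
  have hvc1 : v ∈ (c.rotate u huc).support := by
    rw [← SimpleGraph.Walk.mem_verts_toSubgraph, htsg]; exact hv
  set c1 : G.Walk u u := c.rotate u huc with hc1def
  set A1 := c1.takeUntil v hvc1 with hA1def
  set A2 := c1.dropUntil v hvc1 with hA2def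
  have hspec : A1.append A2 = c1 := c1.take_spec hvc1
  have hlenrot : c1.length = c.length := by
    have h1 := (c.rotate_darts u huc).perm.length_eq
    rw [SimpleGraph.Walk.length_darts, SimpleGraph.Walk.length_darts] at h1; exact h1
  have hlen12 : A1.length + A2.length = c.length := by
    rw [← hlenrot, ← hspec, SimpleGraph.Walk.length_append]
  have hsupp : c1.support = A1.support ++ A2.support.tail := by
    rw [← hspec, SimpleGraph.Walk.support_append]
  have htail : c1.support.tail = A1.support.tail ++ A2.support.tail := by
    rw [hsupp, A1.support_eq_cons]; rfl
  have hnd : (A1.support.tail ++ A2.support.tail).Nodup := htail ▸ hcyc1.support_nodup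
  obtain ⟨hnd1, hnd2, hdj⟩ := List.nodup_append.mp hnd
  have huA2t : u ∈ A2.support.tail := by
    have h1 : u ∈ A2.support := A2.end_mem_support
    rw [A2.support_eq_cons, List.mem_cons] at h1
    rcases h1 with h1 | h1
    · exact absurd h1 huv
    · exact h1
  have hvA1t : v ∈ A1.support.tail := by
    have h1 : v ∈ A1.support := A1.end_mem_support
    rw [A1.support_eq_cons, List.mem_cons] at h1
    rcases h1 with h1 | h1
    · exact absurd h1 (Ne.symm huv)
    · exact h1
  have hA1path : A1.IsPath := by
    rw [SimpleGraph.Walk.isPath_def, A1.support_eq_cons, List.nodup_cons]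
    exact ⟨fun h => hdj u h u huA2t rfl, hnd1⟩
  have hA2path : A2.IsPath := by
    rw [SimpleGraph.Walk.isPath_def, A2.support_eq_cons, List.nodup_cons]
    exact ⟨fun h => hdj v hvA1t v h rfl, hnd2⟩
  have hA1le : A1.toSubgraph ≤ c.toSubgraph := by
    rw [← htsg, ← hspec, SimpleGraph.Walk.toSubgraph_append]; exact le_sup_left
  have hA2le : A2.toSubgraph ≤ c.toSubgraph := by
    rw [← htsg, ← hspec, SimpleGraph.Walk.toSubgraph_append]; exact le_sup_right
  have hd1 : c.toSubgraph.coe.dist ⟨u, hu⟩ ⟨v, hv⟩ ≤ A1.length := by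
    obtain ⟨w', hw'⟩ := exists_coe_walk c.toSubgraph A1 hA1le hu hv
    calc c.toSubgraph.coe.dist ⟨u, hu⟩ ⟨v, hv⟩ ≤ w'.length := SimpleGraph.dist_le w'
    _ = A1.length := hw'
  have hd2 : c.toSubgraph.coe.dist ⟨u, hu⟩ ⟨v, hv⟩ ≤ A2.length := by
    obtain ⟨w', hw'⟩ := exists_coe_walk c.toSubgraph A2.reverse
      (by rw [SimpleGraph.Walk.toSubgraph_reverse]; exact hA2le) hu hv
    calc c.toSubgraph.coe.dist ⟨u, hu⟩ ⟨v, hv⟩ ≤ w'.length := SimpleGraph.dist_le w'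
    _ = A2.length := by rw [hw', SimpleGraph.Walk.length_reverse]
  have hp1 : p.length < A1.length := hplt.trans_le hd1
  have hp2 : p.length < A2.length := hplt.trans_le hd2
  have hppos : 1 ≤ p.length := by
    rcases Nat.eq_zero_or_pos p.length with h0 | h0
    · exact absurd (SimpleGraph.Walk.eq_of_length_eq_zero h0) huv
    · exact h0
  have hsubA1 : ∀ w ∈ A1.support, w ∈ c.toSubgraph.verts := by
    intro w hw
    rw [← htsg, SimpleGraph.Walk.mem_verts_toSubgraph]
    exact SimpleGraph.Walk.support_takeUntil_subset _ _ hw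
  have hsubA2 : ∀ w ∈ A2.support, w ∈ c.toSubgraph.verts := by
    intro w hw
    rw [← htsg, SimpleGraph.Walk.mem_verts_toSubgraph]
    exact SimpleGraph.Walk.support_dropUntil_subset _ _ hw
  have hC1 : (p.append A2).IsCycle :=
    append_isCycle huv hp hA2path (by omega)
      (fun w hwp hwq => hpint w hwp (hsubA2 w hwq))
  have hC2 : (A1.append p.reverse).IsCycle :=
    append_isCycle huv hA1path hp.reverse
      (by rw [SimpleGraph.Walk.length_reverse]; omega)
      (fun w hw hw' => hpint w (by
        rw [SimpleGraph.Walk.support_reverse] at hw'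
        exact List.mem_reverse.mp hw') (hsubA1 w hw))
  have hC1len : (p.append A2).length < c.length := by
    rw [SimpleGraph.Walk.length_append]; omega
  have hC2len : (A1.append p.reverse).length < c.length := by
    rw [SimpleGraph.Walk.length_append, SimpleGraph.Walk.length_reverse]; omega
  have hgoal1 : ∀ z w : V, (z ∈ p.support ∨ z ∈ A2.support) → (w ∈ p.support ∨ w ∈ A2.support) →
      ∃ (y : V) (c' : G.Walk y y), c'.IsCycle ∧ c'.length < c.length ∧
        z ∈ c'.toSubgraph.verts ∧ w ∈ c'.toSubgraph.verts := by
    intro z w hz hw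
    exact ⟨u, p.append A2, hC1, hC1len,
      (SimpleGraph.Walk.mem_verts_toSubgraph _).mpr
        ((SimpleGraph.Walk.mem_support_append_iff _ _).mpr hz),
      (SimpleGraph.Walk.mem_verts_toSubgraph _).mpr
        ((SimpleGraph.Walk.mem_support_append_iff _ _).mpr hw)⟩
  have hgoal2 : ∀ z w : V, (z ∈ A1.support ∨ z ∈ p.support) → (w ∈ A1.support ∨ w ∈ p.support) →
      ∃ (y : V) (c' : G.Walk y y), c'.IsCycle ∧ c'.length < c.length ∧
        z ∈ c'.toSubgraph.verts ∧ w ∈ c'.toSubgraph.verts := by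
    intro z w hz hw
    refine ⟨u, A1.append p.reverse, hC2, hC2len, ?_, ?_⟩ <;>
    · rw [SimpleGraph.Walk.mem_verts_toSubgraph, SimpleGraph.Walk.mem_support_append_iff,
        SimpleGraph.Walk.support_reverse]
      first
      | exact hz.imp id (fun h => List.mem_reverse.mpr h)
      | exact hw.imp id (fun h => List.mem_reverse.mpr h)
  have haS : a ∈ A1.support ∨ a ∈ A2.support := by
    have h1 : a ∈ c1.support := by
      rw [← SimpleGraph.Walk.mem_verts_toSubgraph]
      show a ∈ (c.rotate u huc).toSubgraph.verts
      rw [htsg]; exact ha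
    rw [← hspec, SimpleGraph.Walk.mem_support_append_iff] at h1; exact h1
  have hbS : b ∈ A1.support ∨ b ∈ A2.support := by
    have h1 : b ∈ c1.support := by
      rw [← SimpleGraph.Walk.mem_verts_toSubgraph]
      show b ∈ (c.rotate u huc).toSubgraph.verts
      rw [htsg]; exact hb
    rw [← hspec, SimpleGraph.Walk.mem_support_append_iff] at h1; exact h1
  have hTD : ∀ {s t y : V} (P : G.Walk s t) (_ : P.IsPath) (hy : y ∈ P.support) {w : V},
      w ∈ (P.takeUntil y hy).support → w ∈ (P.dropUntil y hy).support → w = y := by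
    intro s t y P hP hy w hw1 hw2
    rw [(P.dropUntil y hy).support_eq_cons, List.mem_cons] at hw2
    rcases hw2 with hw2 | hw2
    · exact hw2
    · exfalso
      have hnodup := hP.support_nodup
      rw [← P.take_spec hy, SimpleGraph.Walk.support_append] at hnodup
      exact (List.nodup_append.mp hnodup).2.2 w hw1 w hw2 rfl
  have h12 : ∀ w : V, w ∈ A1.support → w ∈ A2.support → w = u ∨ w = v := by
    intro w hw1 hw2
    rw [A1.support_eq_cons, List.mem_cons] at hw1
    rw [A2.support_eq_cons, List.mem_cons] at hw2
    rcases hw1 with rfl | hw1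
    · exact Or.inl rfl
    · rcases hw2 with rfl | hw2
      · exact Or.inr rfl
      · exact absurd hw2 (fun h => hdj w hw1 w h rfl)
  have hlentd : ∀ {s t y : V} (P : G.Walk s t) (hy : y ∈ P.support),
      (P.dropUntil y hy).length ≤ P.length := by
    intro s t y P hy
    have h1 := congrArg SimpleGraph.Walk.length (P.take_spec hy)
    rw [SimpleGraph.Walk.length_append] at h1
    omega
  rcases haS with haA1 | haA2
  · by_cases hbA1 : b ∈ A1.support
    · exact goal_imp_fforce (hgoal2 a b (Or.inl haA1) (Or.inl hbA1)) _
    · have hbA2 : b ∈ A2.support := hbS.resolve_left hbA1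
      by_cases haA2 : a ∈ A2.support
      · exact goal_imp_fforce (hgoal1 a b (Or.inr haA2) (Or.inr hbA2)) _
      · -- game: a strictly inside A1, b strictly inside A2
        refine fforce_of_walks c.length (A1.dropUntil a haA1) (A2.dropUntil b hbA2) D hD
          ?_ ?_ ?_ ?_ haD hbD
        · have l1 := hlentd A1 haA1
          have l2 := hlentd A2 hbA2
          omega
        · intro z hz w hw hzw
          subst hzw
          have hz1 : z ∈ A1.support := SimpleGraph.Walk.support_dropUntil_subset _ _ hz
          have hz2 : z ∈ A2.support := SimpleGraph.Walk.support_dropUntil_subset _ _ hw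
          rcases h12 z hz1 hz2 with rfl | rfl
          · have : z = a := hTD A1 hA1path haA1 (SimpleGraph.Walk.start_mem_support _) hz
            rw [← this] at haA2
            exact haA2 (A2.end_mem_support)
          · have : z = b := hTD A2 hA2path hbA2 (SimpleGraph.Walk.start_mem_support _) hw
            rw [← this] at hbA1
            exact hbA1 (A1.end_mem_support)
        · intro w hw
          exact hgoal1 v w (Or.inr A2.start_mem_support)
            (Or.inr (SimpleGraph.Walk.support_dropUntil_subset _ _ hw))
        · intro z hz
          exact hgoal2 z u (Or.inl (SimpleGraph.Walk.support_dropUntil_subset _ _ hz))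
            (Or.inl A1.start_mem_support)
  · by_cases hbA2 : b ∈ A2.support
    · exact goal_imp_fforce (hgoal1 a b (Or.inr haA2) (Or.inr hbA2)) _
    · have hbA1 : b ∈ A1.support := hbS.resolve_right hbA2
      by_cases haA1 : a ∈ A1.support
      · exact goal_imp_fforce (hgoal2 a b (Or.inl haA1) (Or.inl hbA1)) _
      · refine fforce_of_walks c.length (A2.dropUntil a haA2) (A1.dropUntil b hbA1) D hD
          ?_ ?_ ?_ ?_ haD hbD
        · have l1 := hlentd A2 haA2
          have l2 := hlentd A1 hbA1
          omega
        · intro z hz w hw hzw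
          subst hzw
          have hz2 : z ∈ A2.support := SimpleGraph.Walk.support_dropUntil_subset _ _ hz
          have hz1 : z ∈ A1.support := SimpleGraph.Walk.support_dropUntil_subset _ _ hw
          rcases h12 z hz1 hz2 with rfl | rfl
          · have : z = b := hTD A1 hA1path hbA1 (SimpleGraph.Walk.start_mem_support _) hw
            rw [← this] at hbA2
            exact hbA2 (A2.end_mem_support)
          · have : z = a := hTD A2 hA2path haA2 (SimpleGraph.Walk.start_mem_support _) hz
            rw [← this] at haA1
            exact haA1 (A1.end_mem_support)
        · intro w hw
          exact hgoal2 u w (Or.inl A1.start_mem_support)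
            (Or.inl (SimpleGraph.Walk.support_dropUntil_subset _ _ hw))
        · intro z hz
          exact hgoal1 z v (Or.inr (SimpleGraph.Walk.support_dropUntil_subset _ _ hz))
            (Or.inr A2.start_mem_support)
end

section
/- Suppose Facilitator's agents R and J occupy vertices of a cycle C in a graph G that has no shortcut, and Divider's unique agent occupies a vertex z of C. Then Facilitator has a winning strategy taking at most ℓ(C)/2 moves: moving R and J toward each other along the unique path in C − z connecting their positions. -/
open Rendezvous

open Rendezvous SimpleGraph Walk
namespace RendAux
variable {V : Type*} {G : SimpleGraph V}

lemma support_get : ∀ {u v : V} (p : G.Walk u v) (i : ℕ) (hi : i < p.support.length),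
    p.support[i] = p.getVert i := by
  intro u v p
  induction p with
  | nil => intro i hi; simp [Walk.support_nil] at hi; subst hi; simp [Walk.support_nil]
  | cons h q ih =>
    intro i hi
    cases i with
    | zero => simp
    | succ n =>
      simp only [Walk.support_cons, List.getElem_cons_succ, Walk.getVert_cons_succ]
      exact ih n (by simpa [Walk.support_cons] using hi)

lemma tail_get {z : V} (e : G.Walk z z) (i : ℕ) (hi : i + 1 < e.support.length) :
    e.support.tail.get ⟨i, by simp only [List.length_tail]; omega⟩ = e.getVert (i+1) := by
  rw [List.get_tail _ _ _ hi]
  simp only [List.get_eq_getElem]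
  exact support_get e (i+1) hi

lemma cycle_getVert_inj {z : V} {e : G.Walk z z} (hc : e.IsCycle) {i j : ℕ}
    (hi : i < e.length) (hj : j < e.length) (h : e.getVert i = e.getVert j) : i = j := by
  have hnd : e.support.tail.Nodup := hc.2
  have hsl : e.support.length = e.length + 1 := e.length_support
  have htl : e.support.tail.length = e.length := by simp [List.length_tail, hsl]
  have h3 : 3 ≤ e.length := hc.three_le_length
  have hlast : e.getVert e.length = z := e.getVert_length
  -- helper: indices in tail
  have key : ∀ m n : ℕ, m < e.length → n < e.length →
      e.getVert (m+1) = e.getVert (n+1) → m = n := by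
    intro m n hm hn hmn
    have h1 : (m : ℕ) < e.support.tail.length := by omega
    have h2 : (n : ℕ) < e.support.tail.length := by omega
    have := (List.Nodup.get_inj_iff hnd (i := ⟨m, h1⟩) (j := ⟨n, h2⟩)).mp ?_
    · simpa using this
    · rw [tail_get e m (by omega), tail_get e n (by omega)]; exact hmn
  rcases Nat.eq_zero_or_pos i with rfl | hip
  · rcases Nat.eq_zero_or_pos j with rfl | hjp
    · rfl
    · exfalso
      have : (j - 1) = (e.length - 1) := by
        apply key _ _ (by omega) (by omega)
        rw [Nat.sub_add_cancel hjp, Nat.sub_add_cancel (by omega), hlast, ← h, e.getVert_zero]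
      omega
  · rcases Nat.eq_zero_or_pos j with rfl | hjp
    · exfalso
      have : (i - 1) = (e.length - 1) := by
        apply key _ _ (by omega) (by omega)
        rw [Nat.sub_add_cancel hip, Nat.sub_add_cancel (by omega), hlast, h, e.getVert_zero]
      omega
    · have : (i - 1) = (j - 1) := by
        apply key _ _ (by omega) (by omega)
        rw [Nat.sub_add_cancel hip, Nat.sub_add_cancel hjp]; exact h
      omega


open scoped Classical in
noncomputable def fIdx {z : V} (e : G.Walk z z) (w : V) : ZMod e.length :=
  if h : ∃ i, i < e.length ∧ e.getVert i = w then (h.choose : ZMod e.length) else 0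

lemma fIdx_getVert {z : V} {e : G.Walk z z} (hc : e.IsCycle) {i : ℕ} (hi : i ≤ e.length) :
    fIdx e (e.getVert i) = (i : ZMod e.length) := by
  have h3 : 3 ≤ e.length := hc.three_le_length
  rcases lt_or_eq_of_le hi with hlt | rfl
  · have h : ∃ j, j < e.length ∧ e.getVert j = e.getVert i := ⟨i, hlt, rfl⟩
    rw [fIdx]
    rw [dif_pos h]
    have hspec := h.choose_spec
    rw [cycle_getVert_inj hc hspec.1 hlt hspec.2]
  · have h0 : e.getVert e.length = e.getVert 0 := by rw [e.getVert_length, e.getVert_zero]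
    rw [h0, fIdx_getVert hc (by omega : (0:ℕ) ≤ e.length)]
    simp [ZMod.natCast_self]

lemma step_fIdx {z : V} {e : G.Walk z z} (hc : e.IsCycle) {u' v' : V}
    (h : e.toSubgraph.Adj u' v') :
    fIdx e v' = fIdx e u' + 1 ∨ fIdx e u' = fIdx e v' + 1 := by
  obtain ⟨i, hs, hi⟩ := (Walk.toSubgraph_adj_iff _).mp h
  have g1 : fIdx e (e.getVert i) = (i : ZMod e.length) := fIdx_getVert hc (by omega)
  have g2 : fIdx e (e.getVert (i+1)) = ((i+1 : ℕ) : ZMod e.length) := fIdx_getVert hc (by omega)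
  rw [Sym2.eq_iff] at hs
  rcases hs with ⟨h1, h2⟩ | ⟨h1, h2⟩
  · left; rw [← h1, ← h2, g1, g2]; push_cast; ring
  · right; rw [← h1, ← h2, g1, g2]; push_cast; ring

lemma walk_bound {z : V} {e : G.Walk z z} (hc : e.IsCycle) :
    ∀ {p q : e.toSubgraph.verts} (W : e.toSubgraph.coe.Walk p q),
      ∃ s : ℤ, s.natAbs ≤ W.length ∧ (s : ZMod e.length) = fIdx e q.1 - fIdx e p.1 := by
  intro p q W
  induction W with
  | nil => exact ⟨0, by simp⟩
  | @cons p' q' r' h W ih =>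
    obtain ⟨s, hs1, hs2⟩ := ih
    have hadj : e.toSubgraph.Adj p'.1 q'.1 := by
      rwa [SimpleGraph.Subgraph.coe_adj] at h
    rcases step_fIdx hc hadj with hstep | hstep
    · refine ⟨s + 1, ?_, ?_⟩
      · calc (s+1).natAbs ≤ s.natAbs + 1 := by omega
          _ ≤ _ := by simpa [Walk.length_cons] using Nat.add_le_add_right hs1 1
      · push_cast [hs2, hstep]; ring
    · refine ⟨s - 1, ?_, ?_⟩
      · calc (s-1).natAbs ≤ s.natAbs + 1 := by omega
          _ ≤ _ := by simpa [Walk.length_cons] using Nat.add_le_add_right hs1 1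
      · push_cast [hs2, hstep]; ring

lemma getVert_mem_verts {z : V} (e : G.Walk z z) (k : ℕ) (hk : k ≤ e.length) :
    e.getVert k ∈ e.toSubgraph.verts := by
  rw [Walk.mem_verts_toSubgraph, Walk.mem_support_iff_exists_getVert]
  exact ⟨k, rfl, hk⟩

lemma distLB {z : V} {e : G.Walk z z} (hc : e.IsCycle) {k : ℕ}
    (hk1 : 1 ≤ k) (hk2 : k + 1 ≤ e.length) :
    min k (e.length - k) ≤
      e.toSubgraph.coe.dist ⟨z, e.start_mem_verts_toSubgraph⟩
        ⟨e.getVert k, getVert_mem_verts e k (by omega)⟩ := by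
  have h3 : 3 ≤ e.length := hc.three_le_length
  haveI : NeZero e.length := ⟨by omega⟩
  have hconn : e.toSubgraph.coe.Connected := (e.toSubgraph_connected).coe
  have hreach := hconn.preconnected ⟨z, e.start_mem_verts_toSubgraph⟩
      ⟨e.getVert k, getVert_mem_verts e k (by omega)⟩
  obtain ⟨W, hW⟩ := hreach.exists_walk_length_eq_dist
  obtain ⟨s, hs1, hs2⟩ := walk_bound hc W
  rw [hW] at hs1
  have hz0 : fIdx e z = 0 := by
    have := fIdx_getVert hc (by omega : (0:ℕ) ≤ e.length)
    rwa [e.getVert_zero, Nat.cast_zero] at this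
  have hk0 : fIdx e (e.getVert k) = (k : ZMod e.length) := fIdx_getVert hc (by omega)
  rw [hz0, hk0, sub_zero] at hs2
  have hdvd : (e.length : ℤ) ∣ (s - k) := by
    rw [← ZMod.intCast_zmod_eq_zero_iff_dvd]
    push_cast
    rw [hs2]; ring
  obtain ⟨m, hm⟩ := hdvd
  have hm' : s = k + e.length * m := by omega
  rcases le_or_gt 0 m with hmn | hmn
  · have : (0:ℤ) ≤ (e.length : ℤ) * m := mul_nonneg (by positivity) hmn
    omega
  · have : (e.length : ℤ) * m ≤ (e.length : ℤ) * (-1) := by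
      apply mul_le_mul_of_nonneg_left (by omega) (by positivity)
    omega


lemma distUB {z : V} {e : G.Walk z z} (hns : ¬ HasShortcut G e) :
    ∀ (n : ℕ) (u v : V) (hu : u ∈ e.toSubgraph.verts) (hv : v ∈ e.toSubgraph.verts)
      (p : G.Walk u v), p.length ≤ n →
      e.toSubgraph.coe.dist ⟨u, hu⟩ ⟨v, hv⟩ ≤ p.length := by
  classical
  have hconn : e.toSubgraph.coe.Connected := (e.toSubgraph_connected).coe
  intro n
  induction n with
  | zero =>
    intro u v hu hv p hp
    have huv : u = v := Walk.eq_of_length_eq_zero (Nat.le_zero.mp hp)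
    subst huv
    rw [show (⟨u, hu⟩ : e.toSubgraph.verts) = ⟨u, hv⟩ from rfl, SimpleGraph.dist_self]
    exact Nat.zero_le _
  | succ n ih =>
    intro u v hu hv p hp
    have hq : p.bypass.IsPath := p.bypass_isPath
    have hb : p.bypass.length ≤ p.length := p.length_bypass_le
    suffices h : e.toSubgraph.coe.dist ⟨u, hu⟩ ⟨v, hv⟩ ≤ p.bypass.length from h.trans hb
    set q := p.bypass with hqdef
    by_cases hm : ∃ m ∈ q.support, m ∈ e.toSubgraph.verts ∧ m ≠ u ∧ m ≠ v
    · obtain ⟨m, hms, hmv, hmu, hmv'⟩ := hm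
      have hspec := q.take_spec hms
      have hlen : (q.takeUntil m hms).length + (q.dropUntil m hms).length = q.length := by
        rw [← Walk.length_append, hspec]
      have h1 : 1 ≤ (q.takeUntil m hms).length := by
        rcases Nat.eq_zero_or_pos (q.takeUntil m hms).length with h0 | h0
        · exact absurd (Walk.eq_of_length_eq_zero h0).symm hmu
        · exact h0
      have h2 : 1 ≤ (q.dropUntil m hms).length := by
        rcases Nat.eq_zero_or_pos (q.dropUntil m hms).length with h0 | h0
        · exact absurd (Walk.eq_of_length_eq_zero h0) hmv'
        · exact h0
      have ih1 := ih u m hu hmv (q.takeUntil m hms) (by omega)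
      have ih2 := ih m v hmv hv (q.dropUntil m hms) (by omega)
      calc e.toSubgraph.coe.dist ⟨u, hu⟩ ⟨v, hv⟩
          ≤ e.toSubgraph.coe.dist ⟨u, hu⟩ ⟨m, hmv⟩ +
            e.toSubgraph.coe.dist ⟨m, hmv⟩ ⟨v, hv⟩ := hconn.dist_triangle
        _ ≤ _ := add_le_add ih1 ih2
        _ = q.length := hlen
    · push_neg at hm
      by_cases huv : u = v
      · subst huv
        rw [show (⟨u, hu⟩ : e.toSubgraph.verts) = ⟨u, hv⟩ from rfl, SimpleGraph.dist_self]
        exact Nat.zero_le _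
      · by_contra hlt
        push_neg at hlt
        exact hns ⟨u, v, hu, hv, huv, q, hq,
          fun w hw hwv => by
            by_cases h1 : w = u
            · exact Or.inl h1
            · exact Or.inr ((hm w hw hwv h1))
          , hlt⟩

lemma no_collision {z : V} {e : G.Walk z z} (hc : e.IsCycle) (hns : ¬ HasShortcut G e)
    {d : V} {t k : ℕ} (W : G.Walk z d) (hW : W.length ≤ t)
    (h1 : t + 1 ≤ k) (h2 : t + 1 + k ≤ e.length) : d ≠ e.getVert k := by
  rintro rfl
  have hk : k ≤ e.length := by omega
  have hA := distUB hns t z (e.getVert k) e.start_mem_verts_toSubgraph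
    (getVert_mem_verts e k hk) W hW
  have hB := distLB hc (k := k) (by omega) (by omega)
  have := hB.trans (hA.trans hW)
  omega


lemma fwin_symm {G : SimpleGraph V} :
    ∀ (n : ℕ) (a b : V) (D : Multiset V), FWin G n a b D → FWin G n b a D := by
  intro n
  induction n with
  | zero => intro a b D h; exact (h : a = b).symm
  | succ n ih =>
    intro a b D h
    rcases h with h | ⟨a', b', s1, s2, h1, h2, hrest⟩
    · exact Or.inl h.symm
    · refine Or.inr ⟨b', a', s2, s1, h2, h1, ?_⟩
      rcases hrest with he | hf
      · exact Or.inl he.symm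
      · exact Or.inr fun D' hD' hbD haD => ih _ _ _ (hf D' hD' haD hbD)

lemma madj_singleton {G : SimpleGraph V} {d : V} {D' : Multiset V}
    (h : MAdj G {d} D') : ∃ d', Step G d d' ∧ D' = {d'} := by
  rw [MAdj, ← Multiset.cons_zero, Multiset.rel_cons_left] at h
  obtain ⟨b, bs, hb, hbs, rfl⟩ := h
  rw [Multiset.rel_zero_left] at hbs
  subst hbs
  exact ⟨b, hb, rfl⟩

lemma game {z : V} {e : G.Walk z z} (hc : e.IsCycle) (hns : ¬ HasShortcut G e) :
    ∀ (n t i j : ℕ) (d : V), (∃ W : G.Walk z d, W.length ≤ t) →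
      t + 1 ≤ i → i ≤ j → j + t + 1 ≤ e.length → j - i ≤ 2 * n →
      d ≠ e.getVert i → d ≠ e.getVert j →
      FWin G n (e.getVert i) (e.getVert j) {d} := by
  intro n
  induction n with
  | zero =>
    intro t i j d _ hi hij hj hn _ _
    have : i = j := by omega
    subst this
    rfl
  | succ n ih =>
    intro t i j d hW hi hij hj hn hda hdb
    rcases eq_or_lt_of_le hij with heq | hlt
    · subst heq
      exact Or.inl rfl
    · refine Or.inr ?_
      rcases eq_or_lt_of_le (show i + 1 ≤ j from hlt) with hadjc | hlt2
      · -- adjacent: move a onto b's vertex, b stays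
        refine ⟨e.getVert j, e.getVert j, Or.inr ?_, Or.inl rfl, ?_, ?_, Or.inl rfl⟩
        · rw [← hadjc]; exact e.adj_getVert_succ (by omega)
        · simp only [Multiset.mem_singleton]; exact fun h => hdb h.symm
        · simp only [Multiset.mem_singleton]; exact fun h => hdb h.symm
      · -- move both toward each other
        obtain ⟨W, hWl⟩ := hW
        have hadj2 : G.Adj (e.getVert j) (e.getVert (j-1)) := by
          have h := (e.adj_getVert_succ (i := j-1) (by omega)).symm
          rwa [Nat.sub_add_cancel (by omega)] at h
        have hna : d ≠ e.getVert (i+1) :=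
          no_collision hc hns W hWl (by omega) (by omega)
        have hnb : d ≠ e.getVert (j-1) :=
          no_collision hc hns W hWl (by omega) (by omega)
        refine ⟨e.getVert (i+1), e.getVert (j-1),
          Or.inr (e.adj_getVert_succ (by omega)), Or.inr hadj2,
          by simp only [Multiset.mem_singleton]; exact fun h => hna h.symm,
          by simp only [Multiset.mem_singleton]; exact fun h => hnb h.symm,
          Or.inr ?_⟩
        intro D' hD' ha' hb'
        obtain ⟨d', hstep, rfl⟩ := madj_singleton hD'
        simp only [Multiset.mem_singleton] at ha' hb'
        have hW' : ∃ W' : G.Walk z d', W'.length ≤ t + 1 := by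
          rcases hstep with rfl | hadj'
          · exact ⟨W, by omega⟩
          · exact ⟨W.concat hadj', by rw [Walk.length_concat]; omega⟩
        exact ih (t+1) (i+1) (j-1) d' hW' (by omega) (by omega) (by omega) (by omega)
          (fun h => ha' h.symm) (fun h => hb' h.symm)

/-- `HasShortcut` only depends on the subgraph of the cycle. -/
def ShortcutAux (G : SimpleGraph V) (H : G.Subgraph) : Prop :=
  ∃ (u v : V) (hu : u ∈ H.verts) (hv : v ∈ H.verts), u ≠ v ∧
    ∃ p : G.Walk u v, p.IsPath ∧
      (∀ w ∈ p.support, w ∈ H.verts → w = u ∨ w = v) ∧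
      p.length < H.coe.dist ⟨u, hu⟩ ⟨v, hv⟩

lemma hasShortcut_iff_aux {x : V} (c : G.Walk x x) :
    HasShortcut G c ↔ ShortcutAux G c.toSubgraph := Iff.rfl

lemma length_rotate' [DecidableEq V] {u v : V} (c : G.Walk v v) (h : u ∈ c.support) :
    (c.rotate u h).length = c.length := by
  rw [Walk.rotate, Walk.length_append, Nat.add_comm, ← Walk.length_append, c.take_spec h]

end RendAux


/-- if Facilitator's agents occupy vertices `a`, `b` of a cycle `c` of
`G` without a shortcut, and Divider's unique agent occupies a vertex `z` of `c`
(distinct from `a` and `b`), then Facilitator has a winning strategy taking at most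
`ℓ(c)/2` moves. -/
theorem facilitator_wins_on_shortcutless_cycle {V : Type*} (G : SimpleGraph V)
    {x : V} (c : G.Walk x x) (hc : c.IsCycle) (hns : ¬ HasShortcut G c)
    (a b z : V) (ha : a ∈ c.toSubgraph.verts) (hb : b ∈ c.toSubgraph.verts)
    (hz : z ∈ c.toSubgraph.verts) (hza : z ≠ a) (hzb : z ≠ b) :
    FWin G (c.length / 2) a b {z} := by
  classical
  have hzs : z ∈ c.support := (c.mem_verts_toSubgraph).mp hz
  set e := c.rotate z hzs with he
  have hce : e.IsCycle := hc.rotate hzs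
  have hsub : e.toSubgraph = c.toSubgraph := c.toSubgraph_rotate hzs
  have hlen : e.length = c.length := RendAux.length_rotate' c hzs
  have hnse : ¬ HasShortcut G e := by
    rw [RendAux.hasShortcut_iff_aux, hsub, ← RendAux.hasShortcut_iff_aux]
    exact hns
  have h3 : 3 ≤ e.length := hce.three_le_length
  have hae : a ∈ e.support := by
    rw [← Walk.mem_verts_toSubgraph, hsub]; exact ha
  have hbe : b ∈ e.support := by
    rw [← Walk.mem_verts_toSubgraph, hsub]; exact hb
  obtain ⟨i, hia, hil⟩ := Walk.mem_support_iff_exists_getVert.mp hae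
  obtain ⟨j, hjb, hjl⟩ := Walk.mem_support_iff_exists_getVert.mp hbe
  have hi0 : i ≠ 0 := by
    rintro rfl; rw [e.getVert_zero] at hia; exact hza hia
  have hiL : i ≠ e.length := by
    rintro rfl; rw [e.getVert_length] at hia; exact hza hia
  have hj0 : j ≠ 0 := by
    rintro rfl; rw [e.getVert_zero] at hjb; exact hzb hjb
  have hjL : j ≠ e.length := by
    rintro rfl; rw [e.getVert_length] at hjb; exact hzb hjb
  have hWnil : ∃ W : G.Walk z z, W.length ≤ 0 := ⟨Walk.nil, by simp⟩
  rcases le_total i j with hij | hij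
  · have hwin := RendAux.game hce hnse (c.length / 2) 0 i j z hWnil
      (by omega) hij (by omega) (by omega)
      (by rw [hia]; exact hza) (by rw [hjb]; exact hzb)
    rwa [hia, hjb] at hwin
  · have hwin := RendAux.game hce hnse (c.length / 2) 0 j i z hWnil
      (by omega) hij (by omega) (by omega)
      (by rw [hjb]; exact hzb) (by rw [hia]; exact hza)
    rw [hjb, hia] at hwin
    exact RendAux.fwin_symm _ _ _ _ hwin
end

section
/- Let G be a connected P_5-free graph and s, t distinct nonadjacent vertices. If Divider with k agents has a winning strategy in the rendezvous game starting from s and t, then the set S of vertices chosen by Divider for the initial placement of his agents is an (s,t)-separator; consequently d_G(s,t) = λ_G(s,t). -/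
open Rendezvous

section Aux

open SimpleGraph

variable {W : Type*} {H : SimpleGraph W}

private lemma tri' {u v w : W} (h1 : H.Reachable u v) (h2 : H.Reachable v w) :
    H.dist u w ≤ H.dist u v + H.dist v w := by
  obtain ⟨p, hp⟩ := h1.exists_walk_length_eq_dist
  obtain ⟨q, hq⟩ := h2.exists_walk_length_eq_dist
  calc H.dist u w ≤ (p.append q).length := dist_le _
    _ = _ := by rw [Walk.length_append, hp, hq]

private lemma emb_of_dist_ge {a b : W} (hr : H.Reachable a b) (hge : 4 ≤ H.dist a b) :
    Nonempty (SimpleGraph.pathGraph 5 ↪g H) := by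
  obtain ⟨p, hp⟩ := hr.exists_walk_length_eq_dist
  cases p with
  | nil => simp at hp; simp [SimpleGraph.dist_self] at hge
  | @cons _ v1 _ h1 p =>
  cases p with
  | nil => simp at hp; omega
  | @cons _ v2 _ h2 p =>
  cases p with
  | nil => simp at hp; omega
  | @cons _ v3 _ h3 p =>
  cases p with
  | nil => simp at hp; omega
  | @cons _ v4 _ h4 q =>
  simp only [Walk.length_cons] at hp
  have key : ∀ (i : ℕ) (u : W), i ≤ q.length + 4 → H.dist a u ≤ i →
      H.dist u b ≤ q.length + 4 - i →
      H.Reachable a u → H.Reachable u b → H.dist a u = i := by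
    intro i u hi hle1 hle2 hr1 hr2
    have := tri' hr1 hr2
    omega
  have d1 : H.dist a v1 = 1 :=
    key 1 v1 (by omega) (by simpa using dist_le (Walk.cons h1 Walk.nil))
      (by simpa using dist_le (Walk.cons h2 (Walk.cons h3 (Walk.cons h4 q))))
      ⟨Walk.cons h1 Walk.nil⟩ ⟨Walk.cons h2 (Walk.cons h3 (Walk.cons h4 q))⟩
  have d2 : H.dist a v2 = 2 :=
    key 2 v2 (by omega) (by simpa using dist_le (Walk.cons h1 (Walk.cons h2 Walk.nil)))
      (by simpa using dist_le (Walk.cons h3 (Walk.cons h4 q)))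
      ⟨Walk.cons h1 (Walk.cons h2 Walk.nil)⟩ ⟨Walk.cons h3 (Walk.cons h4 q)⟩
  have d3 : H.dist a v3 = 3 :=
    key 3 v3 (by omega)
      (by simpa using dist_le (Walk.cons h1 (Walk.cons h2 (Walk.cons h3 Walk.nil))))
      (by simpa using dist_le (Walk.cons h4 q))
      ⟨Walk.cons h1 (Walk.cons h2 (Walk.cons h3 Walk.nil))⟩ ⟨Walk.cons h4 q⟩
  have d4 : H.dist a v4 = 4 :=
    key 4 v4 (by omega)
      (by simpa using dist_le (Walk.cons h1 (Walk.cons h2 (Walk.cons h3 (Walk.cons h4 Walk.nil)))))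
      (by simpa using dist_le q)
      ⟨Walk.cons h1 (Walk.cons h2 (Walk.cons h3 (Walk.cons h4 Walk.nil)))⟩ ⟨q⟩
  have d0 : H.dist a a = 0 := dist_self
  set f : Fin 5 → W := ![a, v1, v2, v3, v4] with hf
  have hfd : ∀ i : Fin 5, H.dist a (f i) = i.val := by
    intro i
    fin_cases i <;> simp [hf, d0, d1, d2, d3, d4]
  have hreach : ∀ i : Fin 5, H.Reachable a (f i) := by
    intro i
    fin_cases i
    exacts [Reachable.refl a, ⟨Walk.cons h1 Walk.nil⟩, ⟨Walk.cons h1 (Walk.cons h2 Walk.nil)⟩,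
      ⟨Walk.cons h1 (Walk.cons h2 (Walk.cons h3 Walk.nil))⟩,
      ⟨Walk.cons h1 (Walk.cons h2 (Walk.cons h3 (Walk.cons h4 Walk.nil)))⟩]
  have hadjle : ∀ i j : Fin 5, H.Adj (f i) (f j) → j.val ≤ i.val + 1 := by
    intro i j hij
    have htr := tri' (hreach i) ⟨Walk.cons hij Walk.nil⟩
    have h1' : H.dist (f i) (f j) ≤ 1 := by
      simpa using dist_le (Walk.cons hij Walk.nil : H.Walk (f i) (f j))
    have hi := hfd i; have hj := hfd j
    omega
  have hinj : Function.Injective f := by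
    intro i j hij
    have hi := hfd i; have hj := hfd j
    rw [hij] at hi
    exact Fin.ext (by omega)
  refine ⟨⟨⟨f, hinj⟩, ?_⟩⟩
  intro i j
  simp only [Function.Embedding.coeFn_mk, pathGraph_adj]
  constructor
  · intro hij
    have hji := hadjle j i hij.symm
    have hij' := hadjle i j hij
    have hne : i.val ≠ j.val := fun h => hij.ne (congrArg f (Fin.ext h))
    omega
  · intro hij
    fin_cases i <;> fin_cases j <;> simp_all [hf] <;>
      first
        | exact h1 | exact h2 | exact h3 | exact h4
        | exact h1.symm | exact h2.symm | exact h3.symm | exact h4.symm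

private lemma lift_walk {T : Set W} {a b : W} (p : H.Walk a b) :
    ∀ (ha : a ∈ T) (hb : b ∈ T), (∀ v ∈ p.support, v ∈ T) →
      Nonempty ((H.induce T).Walk ⟨a, ha⟩ ⟨b, hb⟩) := by
  induction p with
  | nil => exact fun ha hb _ => ⟨Walk.nil⟩
  | @cons u c w h q ih =>
    intro ha hb hp
    have hc : c ∈ T := hp c (by simp)
    obtain ⟨q'⟩ := ih hc hb (fun v hv => hp v (by simp [hv]))
    exact ⟨Walk.cons (by simpa using h) q'⟩

/-- In a `P₅`-free graph, a vertex set that does not separate `a` from `b`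
(with `a ≠ b` nonadjacent) leaves a path of length 2 or 3. -/
private lemma short_path {G : SimpleGraph V} (hP5 : IsEmpty (SimpleGraph.pathGraph 5 ↪g G))
    {s t : V} (hst : s ≠ t) (hadj : ¬ G.Adj s t) {T : Set V} (hs : s ∈ T) (ht : t ∈ T)
    (p : G.Walk s t) (hp : ∀ v ∈ p.support, v ∈ T) :
    (∃ x, G.Adj s x ∧ G.Adj x t ∧ x ∈ T) ∨
    (∃ x y, G.Adj s x ∧ G.Adj x y ∧ G.Adj y t ∧ x ∈ T ∧ y ∈ T) := by
  set H := G.induce T with hH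
  obtain ⟨q⟩ := lift_walk p hs ht hp
  have hr : H.Reachable ⟨s, hs⟩ ⟨t, ht⟩ := ⟨q⟩
  have hdle : H.dist ⟨s, hs⟩ ⟨t, ht⟩ ≤ 3 := by
    by_contra hc
    push_neg at hc
    obtain ⟨e⟩ := emb_of_dist_ge hr (by omega)
    exact hP5.elim ((SimpleGraph.Embedding.induce T).comp e)
  have hd0 : H.dist ⟨s, hs⟩ ⟨t, ht⟩ ≠ 0 := by
    intro h
    have := hr.dist_eq_zero_iff.mp h
    exact hst (by simpa using congrArg Subtype.val this)
  have hd1 : H.dist ⟨s, hs⟩ ⟨t, ht⟩ ≠ 1 := by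
    intro h
    have := SimpleGraph.dist_eq_one_iff_adj.mp h
    exact hadj (by simpa [hH] using this)
  obtain ⟨w, hw⟩ := hr.exists_walk_length_eq_dist
  interval_cases hdd : (H.dist ⟨s, hs⟩ ⟨t, ht⟩)
  · exact absurd rfl hd0
  · exact absurd rfl hd1
  · -- length-2 walk
    cases w with
    | nil => simp at hw
    | @cons _ x _ hx w =>
    cases w with
    | nil => simp at hw
    | @cons _ y _ hy w =>
    cases w with
    | nil =>
      exact Or.inl ⟨x.val, by simpa [hH] using hx, by simpa [hH] using hy, x.prop⟩
    | cons _ _ => simp [Walk.length_cons] at hw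
  · -- length-3 walk
    cases w with
    | nil => simp at hw
    | @cons _ x _ hx w =>
    cases w with
    | nil => simp at hw
    | @cons _ y _ hy w =>
    cases w with
    | nil => simp at hw
    | @cons _ z _ hz w =>
    cases w with
    | nil =>
      exact Or.inr ⟨x.val, y.val, by simpa [hH] using hx, by simpa [hH] using hy, by simpa [hH] using hz,
        x.prop, y.prop⟩
    | cons _ _ => simp [Walk.length_cons] at hw

end Aux

section Game

variable {V : Type*} {G : SimpleGraph V}

private lemma fwin_one {s t x : V} {D : Multiset V} (h1 : G.Adj s x) (h2 : G.Adj x t)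
    (hx : x ∉ D) : FWin G 1 s t D :=
  Or.inr ⟨x, x, Or.inr h1, Or.inr h2.symm, hx, hx, Or.inl rfl⟩

private lemma fwin_two {s t x y : V} {D : Multiset V} (h1 : G.Adj s x) (h2 : G.Adj x y)
    (h3 : G.Adj y t) (hx : x ∉ D) (hy : y ∉ D) : FWin G 2 s t D :=
  Or.inr ⟨x, y, Or.inr h1, Or.inr h3.symm, hx, hy,
    Or.inr fun _D' _ _hx' hy' => Or.inr ⟨y, y, Or.inr h2, Or.inl rfl, hy', hy', Or.inl rfl⟩⟩

private lemma step_walk {a b : V} (h : Step G a b) :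
    ∃ w : G.Walk a b, ∀ v ∈ w.support, v = a ∨ v = b := by
  rcases h with rfl | ha
  · exact ⟨SimpleGraph.Walk.nil, by simp⟩
  · refine ⟨SimpleGraph.Walk.cons ha SimpleGraph.Walk.nil, ?_⟩
    intro v hv
    simpa using hv

/-- The stationary strategy: sitting on a separator wins for Divider. -/
private lemma stationary_wins (S : Finset V) :
    ∀ (n : ℕ) (a b : V), a ∉ S → b ∉ S →
      (∀ q : G.Walk a b, ∃ v ∈ q.support, v ∈ S) → ¬ FWin G n a b S.val := by
  intro n
  induction n with
  | zero =>
    intro a b ha _hb hsep h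
    subst h
    obtain ⟨v, hv, hvS⟩ := hsep SimpleGraph.Walk.nil
    simp only [SimpleGraph.Walk.support_nil, List.mem_singleton] at hv
    exact ha (hv ▸ hvS)
  | succ n ih =>
    intro a b ha hb hsep h
    rcases h with h | ⟨a', b', st1, st2, ha', hb', h⟩
    · subst h
      obtain ⟨v, hv, hvS⟩ := hsep SimpleGraph.Walk.nil
      simp only [SimpleGraph.Walk.support_nil, List.mem_singleton] at hv
      exact ha (hv ▸ hvS)
    · have ha'S : a' ∉ S := fun hc => ha' (Finset.mem_def.mp hc)
      have hb'S : b' ∉ S := fun hc => hb' (Finset.mem_def.mp hc)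
      obtain ⟨w1, hw1⟩ := step_walk st1
      obtain ⟨w2, hw2⟩ := step_walk st2
      have hsep' : ∀ q : G.Walk a' b', ∃ v ∈ q.support, v ∈ S := by
        intro q
        obtain ⟨v, hv, hvS⟩ := hsep (w1.append (q.append w2.reverse))
        rw [SimpleGraph.Walk.mem_support_append_iff] at hv
        rcases hv with hv | hv
        · rcases hw1 v hv with rfl | rfl
          · exact absurd hvS ha
          · exact ⟨v, q.start_mem_support, hvS⟩
        · rw [SimpleGraph.Walk.mem_support_append_iff] at hv
          rcases hv with hv | hv
          · exact ⟨v, hv, hvS⟩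
          · rw [SimpleGraph.Walk.support_reverse, List.mem_reverse] at hv
            rcases hw2 v hv with rfl | rfl
            · exact absurd hvS hb
            · exact ⟨v, q.end_mem_support, hvS⟩
      rcases h with rfl | h
      · obtain ⟨v, hv, hvS⟩ := hsep' SimpleGraph.Walk.nil
        simp only [SimpleGraph.Walk.support_nil, List.mem_singleton] at hv
        exact ha'S (hv ▸ hvS)
      · exact ih a' b' ha'S hb'S hsep'
          (h S.val (Multiset.rel_refl_of_refl_on fun x _ => Or.inl rfl) ha' hb')

end Game

/-- let `G` be a connected `P₅`-free graph and `s`, `t` distinct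
nonadjacent vertices. If Divider with `k` agents has a winning strategy with initial
placement `D` (Facilitator can never force a meeting from `s`, `t` against `D`), then
the set of vertices of `D` is an `(s,t)`-separator; consequently
`d_G(s,t) = λ_G(s,t)`. -/
theorem p5_free_initial_placement_is_separator {V : Type*} [DecidableEq V]
    (G : SimpleGraph V) (hconn : G.Connected)
    (hP5 : IsEmpty (SimpleGraph.pathGraph 5 ↪g G))
    (s t : V) (hst : s ≠ t) (hadj : ¬ G.Adj s t) :
    (∀ D : Multiset V, s ∉ D → t ∉ D → (∀ n, ¬ FWin G n s t D) →
      IsSeparator G s t D.toFinset) ∧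
    dNum G s t = lambdaNum G s t := by
  have partA : ∀ D : Multiset V, s ∉ D → t ∉ D → (∀ n, ¬ FWin G n s t D) →
      IsSeparator G s t D.toFinset := by
    intro D hsD htD hnw
    refine ⟨by simpa using hsD, by simpa using htD, ?_⟩
    intro p
    by_contra hc
    push_neg at hc
    have hp : ∀ v ∈ p.support, v ∈ ({v : V | v ∉ D} : Set V) := by
      intro v hv
      simpa using fun hvd => hc v hv (Multiset.mem_toFinset.mpr hvd)
    rcases short_path hP5 hst hadj (T := {v : V | v ∉ D}) hsD htD p hp with
      ⟨x, h1, h2, hx⟩ | ⟨x, y, h1, h2, h3, hx, hy⟩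
    · exact hnw 1 (fwin_one h1 h2 hx)
    · exact hnw 2 (fwin_two h1 h2 h3 hx hy)
  refine ⟨partA, ?_⟩
  apply le_antisymm
  · -- dNum ≤ lambdaNum : a separator gives a stationary Divider win
    apply le_sInf
    rintro n ⟨S, hScard, hSsep⟩
    obtain ⟨hsS, htS, hsep⟩ := hSsep
    have hwin : DividerWins G s t S.card := by
      refine ⟨S.val, rfl, fun hc => hsS (Finset.mem_def.mpr hc),
        fun hc => htS (Finset.mem_def.mpr hc), fun n => stationary_wins S n s t hsS htS hsep⟩
    calc dNum G s t ≤ (S.card : ℕ∞) := sInf_le ⟨S.card, rfl, hwin⟩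
      _ = n := hScard
  · -- lambdaNum ≤ dNum : a winning placement is a separator
    apply le_sInf
    rintro n ⟨k, hk, D, hDcard, hsD, htD, hnw⟩
    have hsep := partA D hsD htD hnw
    calc lambdaNum G s t ≤ (D.toFinset.card : ℕ∞) := sInf_le ⟨D.toFinset, rfl, hsep⟩
      _ ≤ (k : ℕ∞) := by
          exact_mod_cast (hDcard ▸ Multiset.toFinset_card_le D)
      _ = n := hk
end

section
/- Let G be a connected graph, s and t distinct nonadjacent vertices lying in the same independent module U of a neighborhood decomposition of G (so N_G(s) = N_G(t)). Then d_G(s,t) = |N_G(s) ∩ N_G(t)| = λ_G(s,t); in particular, Facilitator wins the rendezvous game in one step against Divider with k agents if and only if k < |N_G(s)|. -/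
namespace Rendezvous

/-- `U` is a module of `G`: every vertex outside `U` is adjacent to all of `U`
or to none of `U`. -/
def IsModule {V : Type*} (G : SimpleGraph V) (U : Set V) : Prop :=
  ∀ v ∉ U, (∀ u ∈ U, G.Adj v u) ∨ (∀ u ∈ U, ¬ G.Adj v u)

end Rendezvous

open Rendezvous

/-- let `G` be connected and `s`, `t` distinct nonadjacent vertices
lying in the same independent module `U` of `G` (so `N_G(s) = N_G(t)`). Then
`d_G(s,t) = |N_G(s) ∩ N_G(t)| = λ_G(s,t)`, and Facilitator wins the rendezvous game
in one step against Divider with `k` agents if and only if `k < |N_G(s)|`. -/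
theorem same_independent_module_dNum {V : Type*} [Fintype V] [DecidableEq V]
    (G : SimpleGraph V) [DecidableRel G.Adj] (hconn : G.Connected)
    (U : Set V) (hmod : IsModule G U) (hind : U.Pairwise fun a b => ¬ G.Adj a b)
    (s t : V) (hs : s ∈ U) (ht : t ∈ U) (hst : s ≠ t) (hadj : ¬ G.Adj s t) :
    dNum G s t = ((G.neighborFinset s ∩ G.neighborFinset t).card : ℕ∞) ∧
    lambdaNum G s t = ((G.neighborFinset s ∩ G.neighborFinset t).card : ℕ∞) ∧
    ∀ k : ℕ,
      (∀ D : Multiset V, Multiset.card D = k → s ∉ D → t ∉ D → FWin G 1 s t D) ↔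
        k < (G.neighborFinset s).card := by
  classical
  set S := G.neighborFinset s with hS
  -- neighbors of s are also neighbors of t and vice versa
  have hmem : ∀ v, G.Adj s v → G.Adj t v := by
    intro v hv
    have hvU : v ∉ U := fun hvU => (hind hs hvU (G.ne_of_adj hv)) hv
    rcases hmod v hvU with h | h
    · exact (h t ht).symm
    · exact absurd hv.symm (h s hs)
  have hmem' : ∀ v, G.Adj t v → G.Adj s v := by
    intro v hv
    have hvU : v ∉ U := fun hvU => (hind ht hvU (G.ne_of_adj hv)) hv
    rcases hmod v hvU with h | h
    · exact (h s hs).symm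
    · exact absurd hv.symm (h t ht)
  have hNt : G.neighborFinset t = S := by
    ext v
    simp only [SimpleGraph.mem_neighborFinset, hS]
    exact ⟨hmem' v, hmem v⟩
  have hInt : G.neighborFinset s ∩ G.neighborFinset t = S := by
    rw [hNt, hS, Finset.inter_self]
  have hsS : s ∉ S := by simp [hS]
  have htS : t ∉ S := by
    simp only [hS, SimpleGraph.mem_neighborFinset]
    exact hadj
  -- S is nonempty
  have hSne : ∃ v, v ∈ S := by
    obtain ⟨p⟩ := hconn.preconnected s t
    cases p with
    | nil => exact absurd rfl hst
    | cons h q =>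
      exact ⟨_, by simpa [hS, SimpleGraph.mem_neighborFinset] using h⟩
  -- Facilitator wins in one move if Divider has fewer than |S| agents
  have hFWin1 : ∀ D : Multiset V, Multiset.card D < S.card → FWin G 1 s t D := by
    intro D hD
    have hex : ∃ v ∈ S, v ∉ D := by
      by_contra h
      push_neg at h
      have h1 : S ⊆ D.toFinset := fun v hv => Multiset.mem_toFinset.mpr (h v hv)
      have h2 := Finset.card_le_card h1
      have h3 := D.toFinset_card_le
      omega
    obtain ⟨v, hvS, hvD⟩ := hex
    have hsv : G.Adj s v := (SimpleGraph.mem_neighborFinset G s v).mp hvS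
    exact Or.inr ⟨v, v, Or.inr hsv, Or.inr (hmem v hsv), hvD, hvD, Or.inl rfl⟩
  -- Divider wins by occupying all of S forever
  have hstuck : ∀ (D : Multiset V), (∀ v ∈ S, v ∈ D) → s ∉ D → t ∉ D →
      ∀ n, ¬ FWin G n s t D := by
    intro D hSD hsD htD n
    induction n with
    | zero => exact hst
    | succ n ih =>
      rintro (h | ⟨a', b', ha, hb, haD, hbD, h⟩)
      · exact hst h
      · have ha' : a' = s := by
          rcases ha with rfl | ha
          · rfl
          · exact absurd (hSD a' ((SimpleGraph.mem_neighborFinset G s a').mpr ha)) haD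
        have hb' : b' = t := by
          rcases hb with rfl | hb
          · rfl
          · exact absurd (hSD b' ((SimpleGraph.mem_neighborFinset G s b').mpr
              (hmem' b' hb))) hbD
        subst ha'; subst hb'
        rcases h with h | h
        · exact hst h
        · exact ih (h D (Multiset.rel_refl_of_refl_on fun a _ => Or.inl rfl) hsD htD)
  have hD0 : DividerWins G s t S.card := by
    refine ⟨S.val, by simp, by simpa using hsS, by simpa using htS, ?_⟩
    exact hstuck S.val (fun v hv => by simpa using hv) (by simpa using hsS)
      (by simpa using htS)
  -- dNum equals |S|
  have hd : dNum G s t = (S.card : ℕ∞) := by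
    refine le_antisymm (sInf_le ⟨S.card, rfl, hD0⟩) (le_sInf ?_)
    rintro n ⟨k, rfl, D, hcard, hsD, htD, hn⟩
    by_contra hlt
    push_neg at hlt
    have hk : k < S.card := by exact_mod_cast hlt
    exact hn 1 (hFWin1 D (by omega))
  -- lambdaNum equals |S|
  have hsep : IsSeparator G s t S := by
    refine ⟨hsS, htS, ?_⟩
    intro p
    cases p with
    | nil => exact absurd rfl hst
    | cons h q =>
      exact ⟨_, by simp [SimpleGraph.Walk.support_cons],
        (SimpleGraph.mem_neighborFinset G s _).mpr h⟩
  have hl : lambdaNum G s t = (S.card : ℕ∞) := by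
    refine le_antisymm (sInf_le ⟨S, rfl, hsep⟩) (le_sInf ?_)
    rintro n ⟨S', rfl, hS's, hS't, hS'sep⟩
    have hsub : S ⊆ S' := by
      intro v hv
      have hsv : G.Adj s v := (SimpleGraph.mem_neighborFinset G s v).mp hv
      have htv : G.Adj t v := hmem v hsv
      obtain ⟨w, hw, hwS'⟩ :=
        hS'sep (SimpleGraph.Walk.cons hsv (SimpleGraph.Walk.cons htv.symm
          SimpleGraph.Walk.nil))
      simp only [SimpleGraph.Walk.support_cons, SimpleGraph.Walk.support_nil,
        List.mem_cons, List.mem_singleton] at hw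
      rcases hw with rfl | rfl | rfl | h
      · exact absurd hwS' hS's
      · exact hwS'
      · exact absurd hwS' hS't
      · exact absurd h List.not_mem_nil
    exact_mod_cast Finset.card_le_card hsub
  refine ⟨by rw [hd, hInt], by rw [hl, hInt], ?_⟩
  intro k
  constructor
  · intro hall
    by_contra hk
    push_neg at hk
    obtain ⟨v, hvS⟩ := hSne
    have hsv : G.Adj s v := (SimpleGraph.mem_neighborFinset G s v).mp hvS
    set D : Multiset V := S.val + Multiset.replicate (k - S.card) v with hD
    have hcard : Multiset.card D = k := by
      simp only [hD, Multiset.card_add, Multiset.card_replicate]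
      have : S.card ≤ k := by simpa [hS] using hk
      simp only [Finset.card_val]
      omega
    have hvD : ∀ w, w ∈ D → w ∈ S := by
      intro w hw
      rcases Multiset.mem_add.mp hw with hw | hw
      · simpa using hw
      · rw [Multiset.eq_of_mem_replicate hw]; exact hvS
    have hsD : s ∉ D := fun h => hsS (hvD s h)
    have htD : t ∉ D := fun h => htS (hvD t h)
    have := hall D hcard hsD htD
    rcases this with h | ⟨a', b', ha, hb, haD, hbD, h⟩
    · exact hst h
    · have ha' : a' = s := by
        rcases ha with rfl | ha
        · rfl
        · exact absurd (Multiset.mem_add.mpr (Or.inl (Finset.mem_val.mpr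
            ((SimpleGraph.mem_neighborFinset G s a').mpr ha)))) haD
      have hb' : b' = t := by
        rcases hb with rfl | hb
        · rfl
        · exact absurd (Multiset.mem_add.mpr (Or.inl (Finset.mem_val.mpr
            ((SimpleGraph.mem_neighborFinset G s b').mpr (hmem' b' hb))))) hbD
      subst ha'; subst hb'
      rcases h with h | h
      · exact hst h
      · exact hst (h D (Multiset.rel_refl_of_refl_on fun a _ => Or.inl rfl) hsD htD)
  · intro hk D hcard _ _
    exact hFWin1 D (by omega)
end

section
/- Consider the rendezvous game with k Divider agents on a connected graph G limited to τ steps, where Facilitator starts at distinct vertices s, t lying in different modules of a fixed neighborhood decomposition U_1, …, U_ℓ of G. A strategy tree for Divider (the rooted tree of height τ whose nodes are positions reachable under Divider's strategy) is a winning strategy if and only if for every node v of the tree with associated position (F, D), the Facilitator-multiset F contains at most one vertex of each module U_i. -/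
namespace Rendezvous

/-- Positions reachable in the rendezvous game when Divider plays the strategy `d`
(mapping the step number, Facilitator's new positions and Divider's current multiset
to Divider's new multiset), with Facilitator starting on `s`, `t` and Divider's
initial placement `D0`. This is the set of positions of the nodes of the strategy
tree of `d`, indexed by their depth. -/
inductive DReach {V : Type*} (G : SimpleGraph V)
    (d : ℕ → V → V → Multiset V → Multiset V) (s t : V) (D0 : Multiset V) :
    ℕ → V → V → Multiset V → Prop
  | init : DReach G d s t D0 0 s t D0
  | step {n : ℕ} {a b a' b' : V} {D : Multiset V} :
      DReach G d s t D0 n a b D → Step G a a' → Step G b b' → a' ∉ D → b' ∉ D →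
      DReach G d s t D0 (n + 1) a' b' (d n a' b' D)

end Rendezvous

open Rendezvous

/-- consider the rendezvous game with `k` Divider agents on a connected
graph `G` limited to `τ` steps, where the vertex set of `G` is partitioned into
clique/independent modules `U i` and Facilitator starts at distinct vertices `s`, `t`
lying in different modules. Let `d` be a strategy of Divider with initial placement
`D0`, producing only legal moves from reachable positions. Then the strategy (tree)
is winning — i.e. in every reachable position within `τ` steps Facilitator's two
agents occupy distinct vertices — if and only if in every reachable position within
`τ` steps the multiset of Facilitator's agents contains at most one vertex of each
module `U i`. -/
theorem strategy_tree_winning_iff_modules {V ι : Type*} (G : SimpleGraph V)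
    (hconn : G.Connected) (U : ι → Set V)
    (hpart : ∀ v : V, ∃! i, v ∈ U i)
    (hmod : ∀ i, IsModule G (U i))
    (hci : ∀ i, G.IsClique (U i) ∨ (U i).Pairwise fun a b => ¬ G.Adj a b)
    (τ k : ℕ) (s t : V) (hst : s ≠ t)
    (hstmod : ∀ i, ¬ (s ∈ U i ∧ t ∈ U i))
    (d : ℕ → V → V → Multiset V → Multiset V) (D0 : Multiset V)
    (hD0card : Multiset.card D0 = k) (hsD0 : s ∉ D0) (htD0 : t ∉ D0)
    (hdcard : ∀ n a b D, Multiset.card (d n a b D) = k)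
    (hvalid : ∀ n a b D a' b', DReach G d s t D0 n a b D →
      Step G a a' → Step G b b' → a' ∉ D → b' ∉ D →
      MAdj G D (d n a' b' D) ∧ a' ∉ d n a' b' D ∧ b' ∉ d n a' b' D) :
    (∀ n a b D, n ≤ τ → DReach G d s t D0 n a b D → a ≠ b) ↔
    (∀ n a b D, n ≤ τ → DReach G d s t D0 n a b D →
      ∀ i, ¬ (a ∈ U i ∧ b ∈ U i)) := by
  constructor
  · intro hwin
    have key : ∀ n a b D, DReach G d s t D0 n a b D → n ≤ τ →
        ∀ i, ¬ (a ∈ U i ∧ b ∈ U i) := by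
      intro n a b D hr
      induction hr with
      | init =>
        intro _ i hi
        exact hstmod i hi
      | @step m a b a' b' D hprev hsa hsb haD hbD ih =>
        intro hn i hi
        obtain ⟨ha', hb'⟩ := hi
        have hm : m ≤ τ := Nat.le_of_succ_le hn
        by_cases haU : a ∈ U i
        · by_cases hbU : b ∈ U i
          · exact ih hm i ⟨haU, hbU⟩
          · -- b ∉ U i, moved to b' ∈ U i, so b is adjacent to all of U i
            have hbb' : G.Adj b b' := by
              rcases hsb with h | h
              · exact absurd (h ▸ hb') hbU
              · exact h
            have hball : ∀ u ∈ U i, G.Adj b u := by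
              rcases hmod i b hbU with h | h
              · exact h
              · exact absurd hbb' (h b' hb')
            have hba' : G.Adj b a' := hball a' ha'
            have : DReach G d s t D0 (m + 1) a' a' (d m a' a' D) :=
              DReach.step hprev hsa (Or.inr hba') haD haD
            exact hwin (m + 1) a' a' _ hn this rfl
        · -- a ∉ U i, moved to a' ∈ U i, so a is adjacent to all of U i
          have haa' : G.Adj a a' := by
            rcases hsa with h | h
            · exact absurd (h ▸ ha') haU
            · exact h
          have haall : ∀ u ∈ U i, G.Adj a u := by
            rcases hmod i a haU with h | h
            · exact h
            · exact absurd haa' (h a' ha')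
          have hab' : G.Adj a b' := haall b' hb'
          have : DReach G d s t D0 (m + 1) b' b' (d m b' b' D) :=
            DReach.step hprev (Or.inr hab') hsb hbD hbD
          exact hwin (m + 1) b' b' _ hn this rfl
    intro n a b D hn hr
    exact key n a b D hr hn
  · intro h n a b D hn hr heq
    obtain ⟨i, hi, -⟩ := hpart a
    exact h n a b D hn hr i ⟨hi, heq ▸ hi⟩
end
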